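/- arXiv:2006.00541 — 5 statements merged into one kernel-verified Lean document; each statement's English description precedes it below -/
import Mathlib

section
/- Let a ∈ ℚ, a > 0, a ≠ 1, with a = a₀^h and a₀ = a₁·a₂² as in the context, let Γ = ⟨−1,a⟩ and let α ≥ 1. Then the 2-torsion subgroup Γ(2^α)[2] of Γ(2^α) equals {(ℚ*)^{2^α}, −(ℚ*)^{2^α}, a₁^{2^{α−1}}·(ℚ*)^{2^α}, −a₁^{2^{α−1}}·(ℚ*)^{2^α}} if v₂(h) < α, and equals {(ℚ*)^{2^α}, −(ℚ*)^{2^α}} if v₂(h) ≥ α. -/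
/- Common definitions: finitely generated multiplicative subgroups `Γ ⊆ ℚˣ`,
the quotients `Γ(n) = Γ·(ℚ*)ⁿ/(ℚ*)ⁿ`, the invariants `δ(γ)`, the group `tildeΓ(m)`,
the constants `A(Γ,m)` and `B_{Γ,k}`, and the density `ρ(Γ,m)`. -/

open scoped Classical

noncomputable section

/-- The subgroup `(ℚˣ)ⁿ` of `n`-th powers in `ℚˣ`. -/
def powSubgroup (n : ℕ) : Subgroup ℚˣ := (powMonoidHom n : ℚˣ →* ℚˣ).range

/-- `Γ(n)`: the image of `Γ` in `ℚˣ/(ℚˣ)ⁿ`. -/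
def GammaMod (Γ : Subgroup ℚˣ) (n : ℕ) : Subgroup (ℚˣ ⧸ powSubgroup n) :=
  Γ.map (QuotientGroup.mk' (powSubgroup n))

/-- The unit of `ℚˣ` determined by a nonzero integer (junk value `1` at `0`). -/
def intUnit (b : ℤ) : ℚˣ := if h : (b : ℚ) = 0 then 1 else Units.mk0 (b : ℚ) h

/-- The unit of `ℚˣ` determined by a nonzero natural number. -/
def natUnit (b : ℕ) : ℚˣ := intUnit b

/-- A class modulo `n`-th powers contains a positive rational (for even `n` this says
that the class consists of positive rationals). -/
def IsPosClass (n : ℕ) (c : ℚˣ ⧸ powSubgroup n) : Prop :=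
  ∃ x : ℚˣ, QuotientGroup.mk x = c ∧ 0 < (x : ℚ)

/-- `δ(γ)` for a class `γ` modulo `(ℚˣ)ⁿ` (`n = 2^α`): if `γ = ±γ₀^(n/2)·(ℚˣ)ⁿ` with
`γ₀ > 1` squarefree, this is the discriminant of `ℚ(√γ₀)`, namely `γ₀` if `γ₀ ≡ 1 mod 4`
and `4γ₀` otherwise; the trivial class gets the value `1`. -/
def deltaClass (n : ℕ) (c : ℚˣ ⧸ powSubgroup n) : ℕ :=
  if c = 1 then 1
  else if h : ∃ g : ℕ, Squarefree g ∧ 1 < g ∧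
      ((QuotientGroup.mk (natUnit g ^ (n / 2)) : ℚˣ ⧸ powSubgroup n) = c ∨
       (QuotientGroup.mk (-(natUnit g ^ (n / 2))) : ℚˣ ⧸ powSubgroup n) = c)
  then (if h.choose % 4 = 1 then h.choose else 4 * h.choose)
  else 1

/-- The set `tildeΓ(m) ⊆ Γ(m₂)[2]`, where `m₂ = 2^(v₂(m))`. -/
def tildeGamma (Γ : Subgroup ℚˣ) (m : ℕ) :
    Set (ℚˣ ⧸ powSubgroup (2 ^ padicValNat 2 m)) :=
  {c | c ∈ GammaMod Γ (2 ^ padicValNat 2 m) ∧ c ^ 2 = 1 ∧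
    (if IsPosClass (2 ^ padicValNat 2 m) c
     then padicValNat 2 (deltaClass (2 ^ padicValNat 2 m) c) ≤ padicValNat 2 m
     else padicValNat 2 (deltaClass (2 ^ padicValNat 2 m) c) = padicValNat 2 m + 1)}

/-- `B_{Γ,k}`. -/
def BGamma (Γ : Subgroup ℚˣ) (k : ℕ) : ℝ :=
  ∑ᶠ c ∈ tildeGamma Γ k,
    ∏ᶠ ℓ ∈ {ℓ : ℕ | ℓ.Prime ∧ ℓ ∣ deltaClass (2 ^ padicValNat 2 k) c ∧ ¬ ℓ ∣ k},
      (-1 : ℝ) / (((ℓ : ℝ) - 1) * (Nat.card (GammaMod Γ ℓ)) - 1)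

/-- `A(Γ,m)`. -/
def AGamma (Γ : Subgroup ℚˣ) (m : ℕ) : ℝ :=
  (1 / ((Nat.totient m : ℝ) * (Nat.card (GammaMod Γ m) : ℝ))) *
  (∏ᶠ ℓ ∈ {ℓ : ℕ | ℓ.Prime ∧ ℓ ≠ 2 ∧ ℓ ∣ m},
      (1 - (Nat.card (GammaMod Γ (ℓ ^ padicValNat ℓ m)) : ℝ) /
        ((ℓ : ℝ) * (Nat.card (GammaMod Γ (ℓ ^ (padicValNat ℓ m + 1))) : ℝ)))) *
  (∏' ℓ : {ℓ : ℕ // ℓ.Prime ∧ ℓ ≠ 2 ∧ ¬ ℓ ∣ m},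
      (1 - 1 / ((((ℓ : ℕ) : ℝ) - 1) * (Nat.card (GammaMod Γ ((ℓ : ℕ))) : ℝ))))

/-- The set `{ζ_d} ∪ Γ^{1/d}` inside `ℂ`, where `Γ^{1/d}` is the set of real `d`-th
roots of elements of `Γ`. -/
def kummerSet (Γ : Subgroup ℚˣ) (d : ℕ) : Set ℂ :=
  {Complex.exp (2 * Real.pi * Complex.I / d)} ∪
  {z : ℂ | ∃ x : ℝ, (x : ℂ) = z ∧ ∃ γ ∈ Γ, x ^ d = ((γ : ℚ) : ℝ)}

/-- The degree `[ℚ(ζ_d, Γ^{1/d}) : ℚ]`. -/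
def kummerDegree (Γ : Subgroup ℚˣ) (d : ℕ) : ℕ :=
  Module.finrank ℚ (IntermediateField.adjoin ℚ (kummerSet Γ d))

/-- `ρ(Γ,m) = ∑_{k ≥ 1} μ(k)/[ℚ(ζ_{mk},Γ^{1/mk}):ℚ]`. -/
def rhoGamma (Γ : Subgroup ℚˣ) (m : ℕ) : ℝ :=
  ∑' k : ℕ, if k = 0 then 0 else
    (ArithmeticFunction.moebius k : ℝ) / (kummerDegree Γ (m * k) : ℝ)

/-- `Γ` has rank `r ≥ 1`: it contains an element of infinite order. -/
def HasPositiveRank (Γ : Subgroup ℚˣ) : Prop :=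
  ∃ g ∈ Γ, ∀ n : ℕ, 0 < n → g ^ n ≠ 1

/-- The discriminant of the quadratic field `ℚ(√g)`: writing `g = d·t²` with `d` a
squarefree integer, it is `d` if `d ≡ 1 mod 4` and `4d` otherwise (in particular it is
`1` if `g` is a square of a rational; junk value `0` at `g = 0`). -/
def quadDisc (g : ℚ) : ℤ :=
  if h : ∃ d : ℤ, Squarefree d ∧ ∃ t : ℚ, g = (d : ℚ) * t ^ 2
  then (if h.choose % 4 = 1 then h.choose else 4 * h.choose)
  else 0

/-- The support of `Γ`: primes occurring with nonzero valuation in some element of `Γ`. -/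
def suppGamma (Γ : Subgroup ℚˣ) : Set ℕ :=
  {ℓ : ℕ | ℓ.Prime ∧ ∃ γ ∈ Γ, padicValRat ℓ (γ : ℚ) ≠ 0}

/-- The reduction `Γ_p` of `Γ` modulo a prime `p` (not in the support of `Γ`),
as a subgroup of `(ZMod p)ˣ = 𝔽_pˣ`. -/
def reductionGamma (Γ : Subgroup ℚˣ) (p : ℕ) : Subgroup (ZMod p)ˣ :=
  Subgroup.closure
    {x : (ZMod p)ˣ | ∃ γ ∈ Γ,
      (x : ZMod p) = ((γ : ℚ).num : ZMod p) * (((γ : ℚ).den : ZMod p))⁻¹}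

/-- The `m`-th cyclotomic field `K_m = ℚ(ζ_m)` inside `ℂ`. -/
def cycloField (m : ℕ) : IntermediateField ℚ ℂ :=
  IntermediateField.adjoin ℚ {Complex.exp (2 * Real.pi * Complex.I / m)}

/-- `tildeΓ_{m,d} = (Γ·(ℚ*)^d ∩ (K_m^*)^d)/(ℚ*)^d`, as a subset of `ℚˣ/(ℚˣ)^d`. -/
def tildeGammaMD (Γ : Subgroup ℚˣ) (m d : ℕ) : Set (ℚˣ ⧸ powSubgroup d) :=
  {c | ∃ x : ℚˣ, QuotientGroup.mk x = c ∧ (∃ γ ∈ Γ, ∃ y : ℚˣ, x = γ * y ^ d) ∧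
    ∃ z ∈ cycloField m, z ^ d = ((x : ℚ) : ℂ)}

/-- The Artin constant `A = ∏_ℓ (1 - 1/(ℓ² - ℓ))`. -/
def artinConst : ℝ :=
  ∏' ℓ : {ℓ : ℕ // ℓ.Prime}, (1 - 1 / (((ℓ : ℕ) : ℝ) ^ 2 - ((ℓ : ℕ) : ℝ)))

/-- The subgroup `⟨-1, a⟩` of `ℚˣ` generated by `-1` and a rational `a`. -/
def negOneAGroup (a : ℚ) : Subgroup ℚˣ :=
  Subgroup.closure {u : ℚˣ | (u : ℚ) = -1 ∨ (u : ℚ) = a}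

/-- `τ_{a,m}` (depending only on `h`, `m` and `a₁`). -/
def tau (h m a₁ : ℕ) : ℝ :=
  if padicValNat 2 m < padicValNat 2 h then 0
  else if padicValNat 2 h = padicValNat 2 m ∧ padicValNat 2 m = 0 ∧ 2 ∣ h * a₁ then 0
  else if (padicValNat 2 h = 0 ∧ padicValNat 2 m = 0 ∧ ¬ 2 ∣ h * a₁) ∨
      (padicValNat 2 h = padicValNat 2 m ∧ 0 < padicValNat 2 m) ∨
      (padicValNat 2 h < padicValNat 2 m ∧ padicValNat 2 m = 1 ∧ 2 ∣ h * a₁) then -1/3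
  else 1

end


section TorsionAux

private lemma pow_inj_pos' {u v : ℚ} (hu : 0 < u) (hv : 0 < v) {e : ℕ} (he : e ≠ 0)
    (h : u ^ e = v ^ e) : u = v := by
  rcases lt_trichotomy u v with hlt | heq | hlt
  · exact absurd (pow_lt_pow_left₀ hlt hu.le he) (by rw [h]; exact lt_irrefl _)
  · exact heq
  · exact absurd (pow_lt_pow_left₀ hlt hv.le he) (by rw [h]; exact lt_irrefl _)

private lemma key_dvd' (a₀ : ℚ) (ha₀ : 0 < a₀) (hnp : ∀ (b : ℚ) (k : ℕ), 2 ≤ k → a₀ ≠ b ^ k)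
    {m : ℤ} {n : ℕ} (hn : n ≠ 0) {b : ℚ} (hb : 0 < b)
    (heq : a₀ ^ m = b ^ (n : ℤ)) : (n : ℤ) ∣ m := by
  set e : ℕ := Int.gcd m n with hedef
  have hed : (e : ℤ) ∣ (n : ℤ) := Int.gcd_dvd_right m n
  have hedn : e ∣ n := Int.natCast_dvd_natCast.mp hed
  have hne : e ≠ 0 := fun h0 => hn (by
    have := (Int.gcd_eq_zero_iff.mp (hedef ▸ h0)).2
    exact_mod_cast this)
  obtain ⟨n', hn'⟩ := hedn
  set x := Int.gcdA m n
  set y := Int.gcdB m n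
  have hbez : (e : ℤ) = m * x + (n : ℤ) * y := Int.gcd_eq_gcd_ab m n
  set t : ℚ := b ^ x * a₀ ^ y with htdef
  have ht : 0 < t := mul_pos (zpow_pos hb _) (zpow_pos ha₀ _)
  have h1 : a₀ ^ (e : ℤ) = t ^ (n : ℤ) := by
    rw [htdef, mul_zpow, ← zpow_mul, ← zpow_mul, hbez, zpow_add₀ ha₀.ne',
      zpow_mul a₀ m x, heq, ← zpow_mul, mul_comm (n : ℤ) x, mul_comm (n : ℤ) y]
  have h2 : a₀ ^ e = (t ^ n') ^ e := by
    have h2' : a₀ ^ (e : ℤ) = (t ^ (n' : ℤ)) ^ (e : ℤ) := by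
      rw [h1, ← zpow_mul]
      congr 1
      push_cast [hn']
      ring
    rw [zpow_natCast, zpow_natCast, zpow_natCast] at h2'
    exact h2'
  have h3 : a₀ = t ^ n' := pow_inj_pos' ha₀ (pow_pos ht _) hne h2
  have hn'1 : n' = 1 := by
    by_contra hne1
    have hn'0 : n' ≠ 0 := fun h0 => hn (by rw [hn', h0, mul_zero])
    exact hnp t n' (by omega) h3
  have hne' : n = e := by rw [hn', hn'1, mul_one]
  rw [hne']
  exact Int.gcd_dvd_left m n

private lemma natUnit_val' {b : ℕ} (hb : b ≠ 0) : ((natUnit b : ℚˣ) : ℚ) = b := by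
  rw [natUnit, intUnit]
  have : ((b : ℤ) : ℚ) ≠ 0 := by exact_mod_cast hb
  rw [dif_neg this]
  simp

end TorsionAux

/-- **The 2-torsion of `⟨−1,a⟩(2^α)`**: it is `{1, −1, a₁^(2^(α−1)), −a₁^(2^(α−1))}`
(mod `(ℚ*)^(2^α)`) when `v₂(h) < α`, and `{1, −1}` when `v₂(h) ≥ α`. -/
theorem torsion_GammaMod_negOneA (a a₀ a₂ : ℚ) (h a₁ : ℕ)
    (ha : 0 < a) (ha1 : a ≠ 1) (ha₀pos : 0 < a₀)
    (hnp : ∀ (b : ℚ) (k : ℕ), 2 ≤ k → a₀ ≠ b ^ k)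
    (hh : 1 ≤ h) (hah : a = a₀ ^ h)
    (ha₁sf : Squarefree a₁) (ha₁1 : 1 < a₁) (ha₂pos : 0 < a₂)
    (hdec : a₀ = (a₁ : ℚ) * a₂ ^ 2) (α : ℕ) (hα : 1 ≤ α) :
    (padicValNat 2 h < α →
      {c : ℚˣ ⧸ powSubgroup (2 ^ α) | c ∈ GammaMod (negOneAGroup a) (2 ^ α) ∧ c ^ 2 = 1} =
        {1, QuotientGroup.mk (-1),
         QuotientGroup.mk (natUnit a₁ ^ 2 ^ (α - 1)),
         QuotientGroup.mk (-(natUnit a₁ ^ 2 ^ (α - 1)))}) ∧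
    (α ≤ padicValNat 2 h →
      {c : ℚˣ ⧸ powSubgroup (2 ^ α) | c ∈ GammaMod (negOneAGroup a) (2 ^ α) ∧ c ^ 2 = 1} =
        {1, QuotientGroup.mk (-1)}) := by
  haveI : Fact (Nat.Prime 2) := ⟨Nat.prime_two⟩
  have hane : a ≠ 0 := ha.ne'
  have ha₀ne : a₀ ≠ 0 := ha₀pos.ne'
  have ha₂ne : a₂ ≠ 0 := ha₂pos.ne'
  have ha₁0 : a₁ ≠ 0 := by omega
  have hh0 : h ≠ 0 := by omega
  set A : ℚˣ := Units.mk0 a hane with hAdef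
  set A₀ : ℚˣ := Units.mk0 a₀ ha₀ne with hA₀def
  set U₁ : ℚˣ := natUnit a₁ with hU₁def
  set U₂ : ℚˣ := Units.mk0 a₂ ha₂ne with hU₂def
  have hU₁val : (U₁ : ℚ) = (a₁ : ℚ) := natUnit_val' ha₁0
  have hAh : A = A₀ ^ h := Units.ext (by simp [hAdef, hA₀def, hah])
  have hA₀dec : A₀ = U₁ * U₂ ^ 2 := Units.ext (by simp [hA₀def, hU₂def, hdec, hU₁val])
  have hNα : (2 : ℕ) ^ α ≠ 0 := pow_ne_zero _ two_ne_zero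
  have hexp2 : (2 : ℕ) ^ (α - 1) * 2 = 2 ^ α := by
    rw [← pow_succ]; congr 1; omega
  have hexpZ : (2 : ℤ) ^ α = 2 ^ (α - 1) * 2 := by
    rw [← pow_succ]; congr 1; omega
  have hmemPow : ∀ x : ℚˣ, x ∈ powSubgroup (2 ^ α) ↔ ∃ y : ℚˣ, y ^ 2 ^ α = x := by
    intro x
    rw [powSubgroup, MonoidHom.mem_range]
    exact exists_congr fun y => by rw [powMonoidHom_apply]
  have hpow_mem : ∀ m : ℤ, A₀ ^ m ∈ powSubgroup (2 ^ α) ↔ (((2 : ℕ) ^ α : ℕ) : ℤ) ∣ m := by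
    intro m
    constructor
    · intro hx
      obtain ⟨y, hy⟩ := (hmemPow _).mp hx
      have hval : a₀ ^ m = ((y : ℚ)) ^ (((2 : ℕ) ^ α : ℕ) : ℤ) := by
        have h2 := congrArg Units.val hy
        simp only [Units.val_pow_eq_pow_val, Units.val_zpow_eq_zpow_val, hA₀def,
          Units.val_mk0] at h2
        rw [← h2, zpow_natCast]
      have habs : a₀ ^ m = |((y : ℚ))| ^ (((2 : ℕ) ^ α : ℕ) : ℤ) := by
        rw [hval, zpow_natCast, zpow_natCast,
          Even.pow_abs (Nat.even_pow.mpr ⟨even_two, by omega⟩)]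
      exact key_dvd' a₀ ha₀pos hnp hNα (abs_pos.mpr (Units.ne_zero y)) habs
    · rintro ⟨j, rfl⟩
      refine (hmemPow _).mpr ⟨A₀ ^ j, ?_⟩
      rw [← zpow_natCast (A₀ ^ j), ← zpow_mul, mul_comm]
  have hmemΓ : ∀ γ : ℚˣ, γ ∈ negOneAGroup a ↔ ∃ k : ℤ, γ = A ^ k ∨ γ = -A ^ k := by
    intro γ
    have hset : {u : ℚˣ | (u : ℚ) = -1 ∨ (u : ℚ) = a} = {(-1 : ℚˣ), A} := by
      ext v
      simp only [Set.mem_setOf_eq, Set.mem_insert_iff, Set.mem_singleton_iff, Units.ext_iff, hAdef,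
        Units.val_mk0, Units.val_neg, Units.val_one]
    rw [negOneAGroup, hset, Subgroup.mem_closure_pair]
    constructor
    · rintro ⟨m, k, rfl⟩
      rcases Int.even_or_odd m with he | ho
      · exact ⟨k, Or.inl (by rw [he.neg_one_zpow, one_mul])⟩
      · refine ⟨k, Or.inr ?_⟩
        obtain ⟨t, rfl⟩ := ho
        rw [zpow_add, zpow_one, zpow_mul]
        norm_num [zpow_two]
    · rintro ⟨k, rfl | rfl⟩
      · exact ⟨0, k, by simp⟩
      · exact ⟨1, k, by simp⟩
  have hmk_neg : ∀ x y : ℚˣ,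
      (QuotientGroup.mk x : ℚˣ ⧸ powSubgroup (2 ^ α)) = QuotientGroup.mk y →
      (QuotientGroup.mk (-x) : ℚˣ ⧸ powSubgroup (2 ^ α)) = QuotientGroup.mk (-y) := by
    intro x y hxy
    rw [QuotientGroup.eq] at hxy ⊢
    simpa using hxy
  have heq1 : ∀ x : ℚˣ, (QuotientGroup.mk x : ℚˣ ⧸ powSubgroup (2 ^ α)) = 1 ↔
      x ∈ powSubgroup (2 ^ α) := fun x => QuotientGroup.eq_one_iff x
  have hsq1 : ∀ γ : ℚˣ, (((QuotientGroup.mk γ : ℚˣ ⧸ powSubgroup (2 ^ α))) ^ 2 = 1 ↔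
      γ ^ 2 ∈ powSubgroup (2 ^ α)) := by
    intro γ
    rw [← QuotientGroup.mk_pow, heq1]
  have hAk : ∀ k : ℤ, A ^ k = A₀ ^ ((h : ℤ) * k) := by
    intro k
    rw [hAh, ← zpow_natCast A₀ h, ← zpow_mul]
  have hsqA : ∀ k : ℤ, (A ^ k) ^ 2 = A₀ ^ (((h : ℤ) * k) * 2) := by
    intro k
    rw [hAk, ← zpow_natCast (A₀ ^ ((h : ℤ) * k)) 2, ← zpow_mul]
    norm_num
  have hGammaMem : ∀ c : ℚˣ ⧸ powSubgroup (2 ^ α),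
      c ∈ GammaMod (negOneAGroup a) (2 ^ α) ↔
      ∃ γ ∈ negOneAGroup a, QuotientGroup.mk γ = c := by
    intro c
    rw [GammaMod, Subgroup.mem_map]
    simp only [QuotientGroup.mk'_apply]
  have hclass : ∀ j : ℤ, Odd j →
      (QuotientGroup.mk (A₀ ^ ((2 : ℤ) ^ (α - 1) * j)) : ℚˣ ⧸ powSubgroup (2 ^ α)) =
        QuotientGroup.mk (U₁ ^ 2 ^ (α - 1)) := by
    intro j hj
    have step1 : (QuotientGroup.mk (A₀ ^ ((2 : ℤ) ^ (α - 1) * j)) : ℚˣ ⧸ powSubgroup (2 ^ α)) =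
        QuotientGroup.mk (A₀ ^ ((2 : ℤ) ^ (α - 1))) := by
      rw [QuotientGroup.eq]
      have hrw : (A₀ ^ ((2 : ℤ) ^ (α - 1) * j))⁻¹ * A₀ ^ ((2 : ℤ) ^ (α - 1)) =
          A₀ ^ ((2 : ℤ) ^ (α - 1) * (1 - j)) := by
        rw [← zpow_neg, ← zpow_add]
        congr 1
        ring
      rw [hrw]
      refine (hpow_mem _).mpr ?_
      obtain ⟨t, ht⟩ := hj
      refine ⟨-t, ?_⟩
      push_cast
      rw [ht, hexpZ]
      ring
    have hA₀e : A₀ ^ ((2 : ℤ) ^ (α - 1)) = U₁ ^ 2 ^ (α - 1) * U₂ ^ 2 ^ α := by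
      have hc : ((2 : ℤ) ^ (α - 1)) = ((2 ^ (α - 1) : ℕ) : ℤ) := by push_cast; ring
      rw [hc, zpow_natCast, hA₀dec, mul_pow, ← pow_mul,
        show 2 * 2 ^ (α - 1) = 2 ^ α from by rw [← hexp2]; ring]
    rw [step1, QuotientGroup.eq, hA₀e]
    have hinv : (U₁ ^ 2 ^ (α - 1) * U₂ ^ 2 ^ α)⁻¹ * U₁ ^ 2 ^ (α - 1) = (U₂ ^ 2 ^ α)⁻¹ := by
      group
    rw [hinv]
    exact Subgroup.inv_mem _ ((hmemPow _).mpr ⟨U₂, rfl⟩)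
  have hone_mem : (1 : ℚˣ ⧸ powSubgroup (2 ^ α)) ∈ GammaMod (negOneAGroup a) (2 ^ α) ∧
      (1 : ℚˣ ⧸ powSubgroup (2 ^ α)) ^ 2 = 1 := ⟨Subgroup.one_mem _, one_pow 2⟩
  have hneg_mem : (QuotientGroup.mk (-1 : ℚˣ) : ℚˣ ⧸ powSubgroup (2 ^ α)) ∈
        GammaMod (negOneAGroup a) (2 ^ α) ∧
      (QuotientGroup.mk (-1 : ℚˣ) : ℚˣ ⧸ powSubgroup (2 ^ α)) ^ 2 = 1 := by
    constructor
    · exact (hGammaMem _).mpr ⟨-1, (hmemΓ (-1)).mpr ⟨0, Or.inr (by simp)⟩, rfl⟩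
    · rw [hsq1, neg_one_sq]
      exact Subgroup.one_mem _
  constructor
  · -- case v₂(h) < α
    intro hβα
    have hu : h = 2 ^ padicValNat 2 h * (h / 2 ^ padicValNat 2 h) :=
      (Nat.mul_div_cancel' pow_padicValNat_dvd).symm
    set β := padicValNat 2 h with hβdef
    set u := h / 2 ^ β with hudef
    have huodd : Odd u := by
      rcases Nat.even_or_odd u with he | ho
      · exfalso
        obtain ⟨t, ht⟩ := he
        have hdvd21 : 2 ^ (β + 1) ∣ h := ⟨t, by rw [hu, ht, pow_succ]; ring⟩
        exact pow_succ_padicValNat_not_dvd (p := 2) hh0 hdvd21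
      · exact ho
    have hk0 : (h : ℤ) * (2 : ℤ) ^ (α - 1 - β) = (2 : ℤ) ^ (α - 1) * (u : ℤ) := by
      have hcast : ((h : ℤ)) = 2 ^ β * u := by exact_mod_cast congrArg (Nat.cast : ℕ → ℤ) hu
      rw [hcast, mul_right_comm, ← pow_add, show β + (α - 1 - β) = α - 1 from by omega]
    have hgen : (QuotientGroup.mk (A ^ ((2 : ℤ) ^ (α - 1 - β))) : ℚˣ ⧸ powSubgroup (2 ^ α)) =
        QuotientGroup.mk (U₁ ^ 2 ^ (α - 1)) := by
      rw [hAk, hk0]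
      exact hclass (u : ℤ) ((Int.odd_coe_nat u).mpr huodd)
    have hU₁sq : (U₁ ^ 2 ^ (α - 1)) ^ 2 ∈ powSubgroup (2 ^ α) := by
      rw [← pow_mul, hexp2]
      exact (hmemPow _).mpr ⟨U₁, rfl⟩
    ext c
    simp only [Set.mem_setOf_eq, Set.mem_insert_iff, Set.mem_singleton_iff]
    constructor
    · rintro ⟨hc, hc2⟩
      obtain ⟨γ, hγΓ, rfl⟩ := (hGammaMem _).mp hc
      rw [hsq1] at hc2
      obtain ⟨k, hk | hk⟩ := (hmemΓ γ).mp hγΓ <;> subst hk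
      · rw [hsqA, hpow_mem] at hc2
        obtain ⟨j, hj⟩ : ∃ j : ℤ, (h : ℤ) * k = 2 ^ (α - 1) * j := by
          obtain ⟨j, hj⟩ := hc2
          refine ⟨j, mul_right_cancel₀ (b := (2 : ℤ)) two_ne_zero ?_⟩
          rw [hj]
          push_cast
          rw [hexpZ]
          ring
        rcases Int.even_or_odd j with hje | hjo
        · obtain ⟨t, htj⟩ := hje
          have hdvd2 : (((2 : ℕ) ^ α : ℕ) : ℤ) ∣ (h : ℤ) * k :=
            ⟨t, by rw [hj, htj]; push_cast; rw [hexpZ]; ring⟩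
          exact Or.inl ((heq1 _).mpr (by rw [hAk]; exact (hpow_mem _).mpr hdvd2))
        · refine Or.inr (Or.inr (Or.inl ?_))
          rw [hAk, hj]
          exact hclass j hjo
      · rw [neg_sq, hsqA, hpow_mem] at hc2
        obtain ⟨j, hj⟩ : ∃ j : ℤ, (h : ℤ) * k = 2 ^ (α - 1) * j := by
          obtain ⟨j, hj⟩ := hc2
          refine ⟨j, mul_right_cancel₀ (b := (2 : ℤ)) two_ne_zero ?_⟩
          rw [hj]
          push_cast
          rw [hexpZ]
          ring
        rcases Int.even_or_odd j with hje | hjo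
        · obtain ⟨t, htj⟩ := hje
          have hdvd2 : (((2 : ℕ) ^ α : ℕ) : ℤ) ∣ (h : ℤ) * k :=
            ⟨t, by rw [hj, htj]; push_cast; rw [hexpZ]; ring⟩
          have h1 : (QuotientGroup.mk (A ^ k) : ℚˣ ⧸ powSubgroup (2 ^ α)) =
              QuotientGroup.mk (1 : ℚˣ) :=
            (heq1 _).mpr (by rw [hAk]; exact (hpow_mem _).mpr hdvd2)
          exact Or.inr (Or.inl (hmk_neg _ _ h1))
        · refine Or.inr (Or.inr (Or.inr ?_))
          refine hmk_neg _ _ ?_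
          rw [hAk, hj]
          exact hclass j hjo
    · rintro (rfl | rfl | rfl | rfl)
      · exact hone_mem
      · exact hneg_mem
      · refine ⟨(hGammaMem _).mpr ⟨A ^ ((2 : ℤ) ^ (α - 1 - β)),
          (hmemΓ _).mpr ⟨_, Or.inl rfl⟩, hgen⟩, ?_⟩
        rw [hsq1]
        exact hU₁sq
      · refine ⟨(hGammaMem _).mpr ⟨-A ^ ((2 : ℤ) ^ (α - 1 - β)),
          (hmemΓ _).mpr ⟨_, Or.inr rfl⟩, hmk_neg _ _ hgen⟩, ?_⟩
        rw [hsq1, neg_sq]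
        exact hU₁sq
  · -- case α ≤ v₂(h)
    intro hβα
    have h2αh : (2 : ℕ) ^ α ∣ h := dvd_trans (pow_dvd_pow 2 hβα) pow_padicValNat_dvd
    ext c
    simp only [Set.mem_setOf_eq, Set.mem_insert_iff, Set.mem_singleton_iff]
    constructor
    · rintro ⟨hc, hc2⟩
      obtain ⟨γ, hγΓ, rfl⟩ := (hGammaMem _).mp hc
      obtain ⟨k, hk | hk⟩ := (hmemΓ γ).mp hγΓ <;> subst hk
      · refine Or.inl ((heq1 _).mpr ?_)
        rw [hAk]
        exact (hpow_mem _).mpr (Dvd.dvd.mul_right (Int.natCast_dvd_natCast.mpr h2αh) k)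
      · refine Or.inr ?_
        refine hmk_neg _ _ ((heq1 _).mpr ?_)
        rw [hAk]
        exact (hpow_mem _).mpr (Dvd.dvd.mul_right (Int.natCast_dvd_natCast.mpr h2αh) k)
    · rintro (rfl | rfl)
      · exact hone_mem
      · exact hneg_mem
end

section
/- Let a ∈ ℚ, a > 0, a ≠ 1, with a = a₀^h and a₀ = a₁·a₂² as in the context, let Γ = ⟨−1,a⟩ and let m ≥ 2 be even. Then: if v₂(m) = 1, tildeΓ(m) = {(ℚ*)²} when 2 ∣ h·a₁, and tildeΓ(m) = {(ℚ*)², ε·a₁·(ℚ*)²} when 2 ∤ h·a₁, where ε = +1 if a₁ ≡ 1 mod 4 and ε = −1 if a₁ ≡ 3 mod 4; if v₂(m) = 2, tildeΓ(m) = {(ℚ*)⁴} when 4 ∣ h, tildeΓ(m) = {(ℚ*)⁴, a₁²·(ℚ*)⁴} when 2 ∤ a₁ and 4 ∤ h, and tildeΓ(m) = {(ℚ*)⁴, −a₁²·(ℚ*)⁴} when 2 ∣ a₁ and 4 ∤ h; if α = v₂(m) ≥ 3, tildeΓ(m) = {(ℚ*)^{2^α}} when v₂(h) ≥ v₂(m),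 and tildeΓ(m) = {(ℚ*)^{2^α}, a₁^{2^{α−1}}·(ℚ*)^{2^α}} when v₂(h) < v₂(m). -/
/- Common definitions: finitely generated multiplicative subgroups `Γ ⊆ ℚˣ`,
the quotients `Γ(n) = Γ·(ℚ*)ⁿ/(ℚ*)ⁿ`, the invariants `δ(γ)`, the group `tildeΓ(m)`,
the constants `A(Γ,m)` and `B_{Γ,k}`, and the density `ρ(Γ,m)`. -/

open scoped Classical

namespace NOA

open QuotientGroup

lemma mem_pow {n : ℕ} {x : ℚˣ} : x ∈ powSubgroup n ↔ ∃ y : ℚˣ, y ^ n = x := Iff.rfl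

lemma val_pow_pos {n : ℕ} (hn : 2 ∣ n) (y : ℚˣ) : 0 < ((y ^ n : ℚˣ) : ℚ) := by
  obtain ⟨k, rfl⟩ := hn
  rw [Units.val_pow_eq_pow_val, pow_mul]
  exact pow_pos (pow_two_pos_of_ne_zero y.ne_zero) k

lemma mk_eq_mk_iff {n : ℕ} {x y : ℚˣ} :
    (mk x : ℚˣ ⧸ powSubgroup n) = mk y ↔ ∃ t : ℚˣ, y = x * t ^ n := by
  rw [QuotientGroup.eq]
  constructor
  · rintro ⟨t, ht⟩
    exact ⟨t, by
      have ht' : t ^ n = x⁻¹ * y := ht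
      rw [ht', mul_inv_cancel_left]⟩
  · rintro ⟨t, rfl⟩
    exact ⟨t, (inv_mul_cancel_left x (t ^ n)).symm⟩

lemma mk_eq_one_iff {n : ℕ} {x : ℚˣ} :
    (mk x : ℚˣ ⧸ powSubgroup n) = 1 ↔ ∃ t : ℚˣ, t ^ n = x := by
  rw [QuotientGroup.eq_one_iff]; exact mem_pow

lemma pos_iff_of_mk_eq {n : ℕ} (hn : 2 ∣ n) {x y : ℚˣ}
    (hxy : (mk x : ℚˣ ⧸ powSubgroup n) = mk y) : (0 < (x:ℚ) ↔ 0 < (y:ℚ)) := by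
  obtain ⟨t, rfl⟩ := mk_eq_mk_iff.mp hxy
  rw [Units.val_mul]
  have hp := val_pow_pos hn t
  constructor
  · intro hx; exact mul_pos hx hp
  · intro hxy2
    by_contra hx
    have hx0 : (x:ℚ) < 0 := lt_of_le_of_ne (not_lt.mp hx) x.ne_zero
    nlinarith

lemma isPosClass_mk {n : ℕ} (hn : 2 ∣ n) (x : ℚˣ) :
    IsPosClass n (mk x) ↔ 0 < (x:ℚ) :=
  ⟨fun ⟨x', hx', hp⟩ => (pos_iff_of_mk_eq hn hx').mp hp, fun hp => ⟨x, rfl, hp⟩⟩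

lemma exists_nat_sq {x : ℚ} {N : ℕ} (hx : x ^ 2 = (N : ℚ)) : ∃ s : ℕ, N = s ^ 2 := by
  have hnum := congrArg Rat.num hx
  rw [Rat.num_pow, Rat.num_natCast] at hnum
  refine ⟨x.num.natAbs, ?_⟩
  have := congrArg Int.natAbs hnum
  simpa [Int.natAbs_pow] using this.symm

lemma sf_not_sq {g : ℕ} (hsf : Squarefree g) (hg : 1 < g) (x : ℚ) : x ^ 2 ≠ (g : ℚ) := by
  intro hx
  obtain ⟨s, hs⟩ := exists_nat_sq hx
  have hu : IsUnit s := hsf s ⟨1, by rw [hs]; ring⟩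
  rw [Nat.isUnit_iff] at hu
  subst hu
  simp at hs
  omega

lemma sf_eq_of_mul_eq_sq {g g' s : ℕ} (hg : Squarefree g) (hg' : Squarefree g')
    (hs : g * g' = s ^ 2) : g = g' := by
  have hgs : g ∣ s := (hg.dvd_pow_iff_dvd two_ne_zero).mp ⟨g', hs.symm⟩
  obtain ⟨t, rfl⟩ := hgs
  have hg0 : 0 < g := Nat.pos_of_ne_zero hg.ne_zero
  have h2 : g' = g * t ^ 2 := by
    have hh : g * g' = g * (g * t ^ 2) := by rw [hs]; ring
    exact Nat.eq_of_mul_eq_mul_left hg0 hh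
  have hu : IsUnit t := hg' t ⟨g, by rw [h2]; ring⟩
  rw [Nat.isUnit_iff] at hu
  subst hu
  simpa using h2.symm

lemma natUnit_val {g : ℕ} (hg : g ≠ 0) : ((natUnit g : ℚˣ) : ℚ) = g := by
  rw [natUnit, intUnit, dif_neg]
  · simp
  · simp [hg]

end NOA
namespace NOA

open QuotientGroup

lemma exists_pow_eq_zpow_iff {a₀ : ℚ} (ha₀ : 0 < a₀)
    (hnp : ∀ (b : ℚ) (k : ℕ), 2 ≤ k → a₀ ≠ b ^ k)
    {u₀ : ℚˣ} (hu : (u₀ : ℚ) = a₀) {z : ℤ} {n : ℕ} (hn : 1 ≤ n) :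
    (∃ y : ℚˣ, y ^ n = u₀ ^ z) ↔ (n : ℤ) ∣ z := by
  constructor
  · rintro ⟨y, hy⟩
    by_contra hndvd
    set d : ℕ := Int.gcd z (n : ℤ) with hd
    have hdz : (d : ℤ) ∣ z := Int.gcd_dvd_left z (n : ℤ)
    have hdn : d ∣ n := by
      have h1 : (d : ℤ) ∣ (n : ℤ) := Int.gcd_dvd_right z (n : ℤ)
      exact_mod_cast h1
    have hd0 : d ≠ 0 := by
      intro h0
      have := Int.gcd_eq_zero_iff.mp (hd ▸ h0 : Int.gcd z (n:ℤ) = 0)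
      have : (n : ℤ) = 0 := this.2
      omega
    obtain ⟨k, hk⟩ := hdn
    have hk2 : 2 ≤ k := by
      rcases Nat.lt_or_ge k 2 with hlt | hge
      · exfalso
        interval_cases k
        · omega
        · have hdn' : n = d := by omega
          exact hndvd (by rw [hdn']; exact hdz)
      · exact hge
    have hbez := Int.gcd_eq_gcd_ab z (n : ℤ)
    set A := Int.gcdA z (n : ℤ) with hA
    set B := Int.gcdB z (n : ℤ) with hB
    have hyz : y ^ (n : ℤ) = u₀ ^ z := by rw [zpow_natCast, hy]
    have ht : (y ^ A * u₀ ^ B) ^ (n : ℤ) = u₀ ^ (d : ℤ) := by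
      rw [mul_zpow, ← zpow_mul, ← zpow_mul, mul_comm A (n:ℤ), zpow_mul, hyz,
        ← zpow_mul, ← zpow_add]
      congr 1
      rw [hbez]; ring
    have hval : ((y ^ A * u₀ ^ B : ℚˣ) : ℚ) ^ n = a₀ ^ d := by
      have hc := congrArg (fun w : ℚˣ => (w : ℚ)) ht
      simp only [zpow_natCast] at hc
      rw [Units.val_pow_eq_pow_val, Units.val_pow_eq_pow_val] at hc
      rw [hc, hu]
    set q : ℚ := ((y ^ A * u₀ ^ B : ℚˣ) : ℚ) with hq
    have habs : |q| ^ n = a₀ ^ d := by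
      rw [← abs_pow, hval, abs_of_pos (pow_pos ha₀ d)]
    have hsk : (|q| ^ k) ^ d = a₀ ^ d := by
      rw [← pow_mul, mul_comm k d, ← hk, habs]
    have hfin : |q| ^ k = a₀ := by
      have := pow_left_inj₀ (pow_nonneg (abs_nonneg q) k) ha₀.le hd0
      exact this.mp hsk
    exact hnp |q| k hk2 hfin.symm
  · rintro ⟨t, rfl⟩
    refine ⟨u₀ ^ t, ?_⟩
    rw [← zpow_natCast (u₀ ^ t) n, ← zpow_mul, mul_comm]

lemma mem_negOneA {a : ℚ} (ha : a ≠ 0) {γ : ℚˣ} :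
    γ ∈ negOneAGroup a ↔
      ∃ z : ℤ, γ = (Units.mk0 a ha) ^ z ∨ γ = -((Units.mk0 a ha) ^ z) := by
  have hset : {u : ℚˣ | (u:ℚ) = -1 ∨ (u:ℚ) = a} = {(-1 : ℚˣ), Units.mk0 a ha} := by
    ext u
    simp only [Set.mem_setOf_eq, Set.mem_insert_iff, Set.mem_singleton_iff, Units.ext_iff]
    norm_num
  rw [negOneAGroup, hset, Subgroup.mem_closure_pair]
  constructor
  · rintro ⟨s, z, rfl⟩
    rcases Int.even_or_odd s with hs | hs
    · exact ⟨z, Or.inl (by rw [hs.neg_one_zpow, one_mul])⟩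
    · obtain ⟨j, rfl⟩ := hs
      exact ⟨z, Or.inr (by
        rw [zpow_add, Even.neg_one_zpow ⟨j, by ring⟩, one_mul, zpow_one, neg_one_mul])⟩
  · rintro ⟨z, rfl | rfl⟩
    · exact ⟨0, z, by rw [zpow_zero, one_mul]⟩
    · exact ⟨1, z, by rw [zpow_one, neg_one_mul]⟩

lemma mem_gammaMod {a : ℚ} (ha : a ≠ 0) {n : ℕ} {c : ℚˣ ⧸ powSubgroup n} :
    c ∈ GammaMod (negOneAGroup a) n ↔
      ∃ z : ℤ, c = mk ((Units.mk0 a ha) ^ z) ∨ c = mk (-((Units.mk0 a ha) ^ z)) := by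
  rw [GammaMod, Subgroup.mem_map]
  constructor
  · rintro ⟨γ, hγ, rfl⟩
    obtain ⟨z, hz | hz⟩ := (mem_negOneA ha).mp hγ
    · exact ⟨z, Or.inl (by rw [hz]; rfl)⟩
    · exact ⟨z, Or.inr (by rw [hz]; rfl)⟩
  · rintro ⟨z, rfl | rfl⟩
    · exact ⟨_, (mem_negOneA ha).mpr ⟨z, Or.inl rfl⟩, rfl⟩
    · exact ⟨_, (mem_negOneA ha).mpr ⟨z, Or.inr rfl⟩, rfl⟩

lemma mk_zpow_eq_one {u₀ : ℚˣ} {e : ℤ} {n : ℕ} (hdvd : (n:ℤ) ∣ e) :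
    (mk (u₀ ^ e) : ℚˣ ⧸ powSubgroup n) = 1 := by
  obtain ⟨t, rfl⟩ := hdvd
  rw [mk_eq_one_iff]
  exact ⟨u₀ ^ t, by rw [← zpow_natCast (u₀ ^ t) n, ← zpow_mul, mul_comm]⟩

lemma mk_zpow_eq_special {u₀ u₁ u₂ : ℚˣ} (hu₀ : u₀ = u₁ * u₂ ^ 2)
    {α : ℕ} (hα : 1 ≤ α) {e k : ℤ} (he : e = 2^(α-1) * (2*k+1)) :
    (mk (u₀ ^ e) : ℚˣ ⧸ powSubgroup (2^α)) = mk (u₁ ^ (2^(α-1) : ℕ)) := by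
  obtain ⟨α', rfl⟩ : ∃ α', α = α' + 1 := ⟨α - 1, (Nat.succ_pred_eq_of_pos hα).symm⟩
  simp only [Nat.add_sub_cancel] at he ⊢
  have expand : ∀ e' : ℤ, u₀ ^ e' = u₁ ^ e' * u₂ ^ (2 * e') := by
    intro e'
    rw [hu₀, mul_zpow, ← zpow_natCast u₂ 2, ← zpow_mul]
    norm_num
  have heq : u₀ ^ e = u₁ ^ ((2^α' : ℕ) : ℤ) *
      ((u₁ ^ k * u₂ ^ (2*k+1)) ^ ((2^(α'+1) : ℕ) : ℤ)) := by
    rw [expand e, mul_zpow, ← zpow_mul, ← zpow_mul, ← mul_assoc, ← zpow_add]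
    congr 1
    · congr 1
      push_cast
      rw [he]; ring
    · congr 1
      push_cast
      rw [he]; ring
  rw [heq]
  have : (mk ((u₁ ^ k * u₂ ^ (2*k+1)) ^ ((2^(α'+1) : ℕ) : ℤ)) :
      ℚˣ ⧸ powSubgroup (2^(α'+1))) = 1 := mk_zpow_eq_one dvd_rfl
  rw [← zpow_natCast u₁ (2^α' : ℕ), QuotientGroup.mk_mul, this, mul_one]

end NOA
namespace NOA

open QuotientGroup

lemma mkq_pow {n : ℕ} (x : ℚˣ) (j : ℕ) :
    ((mk x : ℚˣ ⧸ powSubgroup n)) ^ j = mk (x ^ j) := by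
  rw [← QuotientGroup.mk'_apply, ← map_pow, QuotientGroup.mk'_apply]

lemma mk_neg {n : ℕ} (x : ℚˣ) :
    (mk (-x) : ℚˣ ⧸ powSubgroup n) = mk (-1) * mk x := by
  rw [← QuotientGroup.mk_mul, neg_one_mul]

lemma torsion_iff {a a₀ a₂ : ℚ} {h a₁ : ℕ}
    (ha : 0 < a) (ha₀pos : 0 < a₀)
    (hnp : ∀ (b : ℚ) (k : ℕ), 2 ≤ k → a₀ ≠ b ^ k)
    (hh : 1 ≤ h) (hah : a = a₀ ^ h)
    (ha₁1 : 1 < a₁) (ha₂pos : 0 < a₂)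
    (hdec : a₀ = (a₁ : ℚ) * a₂ ^ 2)
    {α : ℕ} (hα : 1 ≤ α) (c : ℚˣ ⧸ powSubgroup (2^α)) :
    (c ∈ GammaMod (negOneAGroup a) (2^α) ∧ c ^ 2 = 1) ↔
      (c = 1 ∨ c = mk (-1) ∨
        (padicValNat 2 h < α ∧
          (c = mk (natUnit a₁ ^ (2^(α-1) : ℕ)) ∨
           c = mk (-(natUnit a₁ ^ (2^(α-1) : ℕ)))))) := by
  obtain ⟨α', rfl⟩ : ∃ α', α = α' + 1 := ⟨α - 1, (Nat.succ_pred_eq_of_pos hα).symm⟩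
  simp only [Nat.add_sub_cancel]
  have ha0 : a ≠ 0 := ha.ne'
  set u : ℚˣ := Units.mk0 a ha0 with hudef
  set u₀ : ℚˣ := Units.mk0 a₀ ha₀pos.ne' with hu₀def
  set u₁ : ℚˣ := natUnit a₁ with hu₁def
  set u₂ : ℚˣ := Units.mk0 a₂ ha₂pos.ne' with hu₂def
  have hu : u = u₀ ^ h := Units.ext (by
    rw [Units.val_pow_eq_pow_val]; exact hah)
  have hu₀ : u₀ = u₁ * u₂ ^ 2 := Units.ext (by
    rw [Units.val_mul, Units.val_pow_eq_pow_val, hu₁def, natUnit_val (by omega)]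
    exact hdec)
  have hh0 : h ≠ 0 := by omega
  have hzpow : ∀ z : ℤ, u ^ z = u₀ ^ ((h:ℤ) * z) := by
    intro z; rw [hu, ← zpow_natCast u₀ h, ← zpow_mul]
  constructor
  · rintro ⟨hmem, hsq⟩
    obtain ⟨z, hz⟩ := (mem_gammaMod ha0).mp hmem
    have hsq' : (mk ((u ^ z) ^ (2:ℕ)) : ℚˣ ⧸ powSubgroup (2^(α'+1))) = 1 := by
      rcases hz with rfl | rfl
      · rw [← mkq_pow]; exact hsq
      · rw [← neg_sq (u ^ z), ← mkq_pow]; exact hsq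
    have hpow2 : (u ^ z) ^ (2:ℕ) = u₀ ^ ((h:ℤ) * (z * ((2:ℕ):ℤ))) := by
      rw [← zpow_natCast (u ^ z) 2, ← zpow_mul, hzpow]
    rw [hpow2, mk_eq_one_iff] at hsq'
    have hdvd : ((2^(α'+1) : ℕ) : ℤ) ∣ (h:ℤ) * (z * ((2:ℕ):ℤ)) :=
      (exists_pow_eq_zpow_iff ha₀pos hnp rfl (Nat.one_le_two_pow)).mp hsq'
    have h2 : (2:ℤ)^α' ∣ (h:ℤ) * z := by
      obtain ⟨t, ht⟩ := hdvd
      push_cast at ht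
      refine ⟨t, ?_⟩
      have h2' : (2:ℤ) * ((h:ℤ) * z) = 2 * ((2:ℤ)^α' * t) := by
        rw [pow_succ] at ht; linarith [ht]
      linarith
    obtain ⟨w, hw⟩ := h2
    rcases Int.even_or_odd w with ⟨j, hj⟩ | ⟨j, hj⟩
    · -- w even : class is ±1
      have hdvd' : ((2^(α'+1) : ℕ) : ℤ) ∣ (h:ℤ) * z := by
        refine ⟨j, ?_⟩
        push_cast
        rw [hw, hj, pow_succ]; ring
      have hone : (mk (u ^ z) : ℚˣ ⧸ powSubgroup (2^(α'+1))) = 1 := by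
        rw [hzpow]; exact mk_zpow_eq_one hdvd'
      rcases hz with rfl | rfl
      · exact Or.inl hone
      · refine Or.inr (Or.inl ?_)
        rw [mk_neg, hone, mul_one]
    · -- w odd : class is ± special
      have hβ : padicValNat 2 h < α' + 1 := by
        by_contra hge
        have hd2 : (2:ℕ)^(α'+1) ∣ h := by
          rw [padicValNat_dvd_iff_le hh0]
          omega
        have : ((2:ℤ)^(α'+1)) ∣ (h:ℤ) * z := by
          exact dvd_mul_of_dvd_left (by exact_mod_cast Int.natCast_dvd_natCast.mpr hd2) z
        rw [hw, hj, pow_succ] at this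
        have h2w : (2:ℤ) ∣ 2 * j + 1 :=
          (mul_dvd_mul_iff_left (show ((2:ℤ)^α') ≠ 0 by positivity)).mp this
        omega
      have hspec : (mk (u ^ z) : ℚˣ ⧸ powSubgroup (2^(α'+1))) = mk (u₁ ^ (2^α' : ℕ)) := by
        rw [hzpow]
        have := mk_zpow_eq_special (u₀ := u₀) (u₁ := u₁) (u₂ := u₂) hu₀
          (α := α' + 1) (by omega) (e := (h:ℤ) * z) (k := j)
          (by simpa using hw.trans (by rw [hj]))
        simpa using this
      refine Or.inr (Or.inr ⟨hβ, ?_⟩)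
      rcases hz with rfl | rfl
      · exact Or.inl hspec
      · refine Or.inr ?_
        rw [mk_neg (u ^ z), mk_neg (u₁ ^ (2^α' : ℕ)), hspec]
  · intro hc
    have hsqspec : ((mk (u₁ ^ (2^α' : ℕ)) : ℚˣ ⧸ powSubgroup (2^(α'+1)))) ^ 2 = 1 := by
      rw [mkq_pow, ← pow_mul, mk_eq_one_iff]
      exact ⟨u₁, by rw [pow_succ]⟩
    rcases hc with rfl | rfl | ⟨hβ, hc⟩
    · exact ⟨Subgroup.one_mem _, one_pow 2⟩
    · refine ⟨(mem_gammaMod ha0).mpr ⟨0, Or.inr (by rw [zpow_zero])⟩, ?_⟩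
      rw [mkq_pow, neg_one_sq, QuotientGroup.mk_one]
    · -- special classes
      set β := padicValNat 2 h with hβdef
      have hd : (2:ℕ)^β ∣ h := pow_padicValNat_dvd
      have hodd : ¬ 2 ∣ (h / 2^β) := by
        have := Nat.not_dvd_ordCompl Nat.prime_two hh0
        rwa [Nat.factorization_def h Nat.prime_two] at this
      obtain ⟨j, hj⟩ : ∃ j, h / 2^β = 2*j+1 := ⟨h / 2^β / 2, by omega⟩
      have hhe : h = 2^β * (2*j+1) := by rw [← hj]; exact (Nat.mul_div_cancel' hd).symm
      have hβα : β ≤ α' := by omega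
      have hexp : (2:ℤ)^β * 2^(α'-β) = 2^α' := by
        rw [← pow_add]; congr 1; omega
      have he : (h:ℤ) * 2^(α'-β) = 2^α' * (2*(j:ℤ)+1) := by
        have hcast : (h:ℤ) = 2^β * (2*(j:ℤ)+1) := by exact_mod_cast hhe
        calc (h:ℤ) * 2^(α'-β) = ((2:ℤ)^β * 2^(α'-β)) * (2*(j:ℤ)+1) := by
              rw [hcast]; ring
          _ = 2^α' * (2*(j:ℤ)+1) := by rw [hexp]
      have hspec : (mk (u ^ ((2:ℤ)^(α'-β))) : ℚˣ ⧸ powSubgroup (2^(α'+1)))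
          = mk (u₁ ^ (2^α' : ℕ)) := by
        rw [hzpow]
        have := mk_zpow_eq_special (u₀ := u₀) (u₁ := u₁) (u₂ := u₂) hu₀
          (α := α' + 1) (by omega) (e := (h:ℤ) * 2^(α'-β)) (k := (j:ℤ)) (by simpa using he)
        simpa using this
      rcases hc with rfl | rfl
      · exact ⟨(mem_gammaMod ha0).mpr ⟨(2:ℤ)^(α'-β), Or.inl hspec.symm⟩, hsqspec⟩
      · refine ⟨(mem_gammaMod ha0).mpr ⟨(2:ℤ)^(α'-β), Or.inr ?_⟩, ?_⟩
        · rw [mk_neg (u₁ ^ (2^α' : ℕ)), mk_neg (u ^ ((2:ℤ)^(α'-β))), hspec]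
        · rw [mkq_pow, neg_sq, ← mkq_pow]
          exact hsqspec
end NOA
namespace NOA

open QuotientGroup

lemma rep_ne_one {α : ℕ} (hα : 1 ≤ α) {g : ℕ} (hsf : Squarefree g) (hg : 1 < g)
    {ε : ℚˣ} (hε : ε = 1 ∨ ε = -1) :
    (mk (ε * natUnit g ^ (2^(α-1) : ℕ)) : ℚˣ ⧸ powSubgroup (2^α)) ≠ 1 := by
  obtain ⟨α', rfl⟩ : ∃ α', α = α' + 1 := ⟨α - 1, (Nat.succ_pred_eq_of_pos hα).symm⟩
  simp only [Nat.add_sub_cancel]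
  intro hc
  rw [mk_eq_one_iff] at hc
  obtain ⟨y, hy⟩ := hc
  have hval := congrArg (fun w : ℚˣ => (w : ℚ)) hy
  simp only [Units.val_pow_eq_pow_val, Units.val_mul] at hval
  have hgval : ((natUnit g : ℚˣ) : ℚ) = g := natUnit_val (by omega)
  rw [hgval] at hval
  have hpos : 0 < (y : ℚ) ^ (2^(α'+1) : ℕ) := by
    have := val_pow_pos (n := 2^(α'+1)) (dvd_pow_self 2 (by omega)) y
    rwa [Units.val_pow_eq_pow_val] at this
  rcases hε with rfl | rfl
  · rw [Units.val_one, one_mul] at hval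
    -- (y:ℚ)^(2^(α'+1)) = g^(2^α')
    have h2 : ((y:ℚ)^2) ^ (2^α' : ℕ) = (g:ℚ) ^ (2^α' : ℕ) := by
      rw [← pow_mul, ← pow_succ'] ; exact hval
    have := (pow_left_inj₀ (sq_nonneg (y:ℚ)) (by positivity) (by positivity)).mp h2
    exact sf_not_sq hsf hg (y:ℚ) this
  · rw [Units.val_neg, Units.val_one, neg_one_mul] at hval
    have hneg : (0:ℚ) < (g:ℚ) ^ (2^α' : ℕ) := by positivity
    rw [hval] at hpos
    linarith

lemma aux_eq {g g' : ℕ} (hgsf : Squarefree g) (hg1 : 1 < g)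
    (hg'sf : Squarefree g') (hg1' : 1 < g')
    {t : ℚ} {α : ℕ} (hα : 1 ≤ α)
    (heq : (g':ℚ)^(2^(α-1):ℕ) = (g:ℚ)^(2^(α-1):ℕ) * t^(2^α : ℕ)) : g = g' := by
  obtain ⟨α', rfl⟩ : ∃ α', α = α' + 1 := ⟨α - 1, (Nat.succ_pred_eq_of_pos hα).symm⟩
  simp only [Nat.add_sub_cancel] at heq
  have h2 : (g':ℚ)^(2^α' : ℕ) = ((g:ℚ) * t^2) ^ (2^α' : ℕ) := by
    rw [mul_pow, ← pow_mul, ← pow_succ']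
    exact heq
  have hgt : (g':ℚ) = (g:ℚ) * t^2 := by
    refine (pow_left_inj₀ (by positivity) (by positivity) (by positivity)).mp h2
  have hsq : ((g:ℚ) * t) ^ 2 = ((g * g' : ℕ) : ℚ) := by
    push_cast
    rw [hgt]; ring
  obtain ⟨s, hs⟩ := exists_nat_sq hsq
  exact sf_eq_of_mul_eq_sq hgsf hg'sf hs

lemma rep_unique {α : ℕ} (hα : 1 ≤ α) {g g' : ℕ}
    (hgsf : Squarefree g) (hg1 : 1 < g) (hg'sf : Squarefree g') (hg1' : 1 < g')
    {ε ε' : ℚˣ} (hε : ε = 1 ∨ ε = -1) (hε' : ε' = 1 ∨ ε' = -1)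
    (heq : (mk (ε * natUnit g ^ (2^(α-1) : ℕ)) : ℚˣ ⧸ powSubgroup (2^α)) =
      mk (ε' * natUnit g' ^ (2^(α-1) : ℕ))) : g = g' := by
  obtain ⟨t, ht⟩ := mk_eq_mk_iff.mp heq
  have hval := congrArg (fun w : ℚˣ => (w : ℚ)) ht
  simp only [Units.val_mul, Units.val_pow_eq_pow_val] at hval
  rw [natUnit_val (by omega : g ≠ 0), natUnit_val (by omega : g' ≠ 0)] at hval
  have htpos : 0 < (t : ℚ) ^ (2^α : ℕ) := by
    have := val_pow_pos (n := 2^α) (dvd_pow_self 2 (by omega)) t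
    rwa [Units.val_pow_eq_pow_val] at this
  have hgpos : (0:ℚ) < (g:ℚ) ^ (2^(α-1) : ℕ) := by positivity
  have hg'pos : (0:ℚ) < (g':ℚ) ^ (2^(α-1) : ℕ) := by positivity
  rcases hε with rfl | rfl <;> rcases hε' with rfl | rfl <;>
    simp only [Units.val_one, Units.val_neg, one_mul, neg_one_mul, neg_mul] at hval
  · exact aux_eq hgsf hg1 hg'sf hg1' hα hval
  · nlinarith
  · nlinarith
  · exact aux_eq hgsf hg1 hg'sf hg1' hα (by linarith)

lemma rep_unique' {α : ℕ} (hα : 1 ≤ α) {g g' : ℕ}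
    (hgsf : Squarefree g) (hg1 : 1 < g) (hg'sf : Squarefree g') (hg1' : 1 < g')
    {ε ε' : ℚˣ} (hε : ε = 1 ∨ ε = -1) (hε' : ε' = 1 ∨ ε' = -1)
    {N : ℕ} (hN : N = 2^(α-1))
    (heq : (mk (ε * natUnit g ^ N) : ℚˣ ⧸ powSubgroup (2^α)) =
      mk (ε' * natUnit g' ^ (2^(α-1) : ℕ))) : g = g' := by
  subst hN
  exact rep_unique hα hgsf hg1 hg'sf hg1' hε hε' heq

lemma pow_div_two {α : ℕ} (hα : 1 ≤ α) : (2:ℕ)^α / 2 = 2^(α-1) := by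
  obtain ⟨α', rfl⟩ : ∃ α', α = α' + 1 := ⟨α - 1, (Nat.succ_pred_eq_of_pos hα).symm⟩
  simp only [Nat.add_sub_cancel]
  rw [pow_succ]
  exact Nat.mul_div_cancel _ (by norm_num)

lemma deltaClass_one (n : ℕ) : deltaClass n 1 = 1 := if_pos rfl

lemma mk_neg_one_ne_one {α : ℕ} (hα : 1 ≤ α) :
    ((mk (-1) : ℚˣ ⧸ powSubgroup (2^α))) ≠ 1 := by
  intro hc
  rw [show (1 : ℚˣ ⧸ powSubgroup (2^α)) = mk 1 from rfl] at hc
  have := (pos_iff_of_mk_eq (dvd_pow_self 2 (by omega)) hc).mpr (by norm_num)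
  norm_num at this

lemma deltaClass_eval {α : ℕ} (hα : 1 ≤ α) {g : ℕ} (hsf : Squarefree g) (hg : 1 < g)
    {ε : ℚˣ} (hε : ε = 1 ∨ ε = -1) :
    deltaClass (2^α) (mk (ε * natUnit g ^ (2^(α-1) : ℕ))) =
      if g % 4 = 1 then g else 4 * g := by
  have hdiv := pow_div_two hα
  have hne := rep_ne_one hα hsf hg hε
  rw [deltaClass, if_neg hne]
  have hex : ∃ g' : ℕ, Squarefree g' ∧ 1 < g' ∧
      ((mk (natUnit g' ^ (2^α / 2)) : ℚˣ ⧸ powSubgroup (2^α)) =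
          mk (ε * natUnit g ^ (2^(α-1):ℕ)) ∨
       (mk (-(natUnit g' ^ (2^α / 2))) : ℚˣ ⧸ powSubgroup (2^α)) =
          mk (ε * natUnit g ^ (2^(α-1):ℕ))) := by
    refine ⟨g, hsf, hg, ?_⟩
    rw [hdiv]
    rcases hε with rfl | rfl
    · exact Or.inl (by rw [one_mul])
    · exact Or.inr (by rw [neg_one_mul])
  rw [dif_pos hex]
  obtain ⟨hsf', hg', hor⟩ := hex.choose_spec
  have hch : hex.choose = g := by
    rcases hor with hor | hor
    · refine rep_unique' hα hsf' hg' hsf hg (Or.inl rfl) hε hdiv ?_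
      rw [one_mul]; exact hor
    · refine rep_unique' hα hsf' hg' hsf hg (Or.inr rfl) hε hdiv ?_
      rw [neg_one_mul]; exact hor
  rw [hch]

lemma deltaClass_neg_one {α : ℕ} (hα : 1 ≤ α) :
    deltaClass (2^α) (mk (-1)) = 1 := by
  have h2 : (2:ℕ) ∣ 2^α := dvd_pow_self 2 (by omega)
  rw [deltaClass, if_neg (mk_neg_one_ne_one hα)]
  rw [dif_neg]
  rintro ⟨g, hsf, hg, hor | hor⟩
  · have hp := (pos_iff_of_mk_eq h2 hor).mp
    have hgval : ((natUnit g ^ (2^α/2) : ℚˣ) : ℚ) = (g:ℚ)^(2^α/2 : ℕ) := by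
      rw [Units.val_pow_eq_pow_val, natUnit_val (by omega)]
    have := hp (by rw [hgval]; positivity)
    norm_num at this
  · have hmk : (mk (natUnit g ^ (2^α/2)) : ℚˣ ⧸ powSubgroup (2^α)) = 1 := by
      have h1 : (mk (-1) : ℚˣ ⧸ powSubgroup (2^α)) * mk (natUnit g ^ (2^α/2)) =
          mk (-1) * 1 := by
        rw [mul_one, ← mk_neg]; exact hor
      exact mul_left_cancel h1
    rw [pow_div_two hα] at hmk
    exact rep_ne_one hα hsf hg (Or.inl rfl) (by rw [one_mul]; exact hmk)

lemma v2_delta {a₁ : ℕ} (hsf : Squarefree a₁) (h1 : 1 < a₁) :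
    padicValNat 2 (if a₁ % 4 = 1 then a₁ else 4 * a₁) =
      if a₁ % 4 = 1 then 0 else if 2 ∣ a₁ then 3 else 2 := by
  by_cases h4 : a₁ % 4 = 1
  · rw [if_pos h4, if_pos h4]
    exact padicValNat.eq_zero_of_not_dvd (by omega)
  · rw [if_neg h4, if_neg h4]
    have ha0 : a₁ ≠ 0 := by omega
    have h44 : padicValNat 2 4 = 2 := by
      rw [show (4:ℕ) = 2^2 by norm_num, padicValNat.prime_pow]
    rw [padicValNat.mul (by norm_num) ha0, h44]
    by_cases h2 : 2 ∣ a₁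
    · rw [if_pos h2]
      have hnd : ¬ (2:ℕ)^2 ∣ a₁ := by
        intro hdd
        have hun := hsf 2 (by rwa [← pow_two])
        rw [Nat.isUnit_iff] at hun
        omega
      have hle : 1 ≤ padicValNat 2 a₁ := one_le_padicValNat_of_dvd (by omega) h2
      have hlt : padicValNat 2 a₁ < 2 := by
        by_contra hge
        exact hnd ((padicValNat_dvd_iff_le ha0).mpr (by omega))
      omega
    · rw [if_neg h2, padicValNat.eq_zero_of_not_dvd h2]

end NOA
namespace NOA

open QuotientGroup

lemma mem_tilde_iff {a a₀ a₂ : ℚ} {h a₁ m : ℕ}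
    (ha : 0 < a) (ha₀pos : 0 < a₀)
    (hnp : ∀ (b : ℚ) (k : ℕ), 2 ≤ k → a₀ ≠ b ^ k)
    (hh : 1 ≤ h) (hah : a = a₀ ^ h)
    (ha₁sf : Squarefree a₁) (ha₁1 : 1 < a₁) (ha₂pos : 0 < a₂)
    (hdec : a₀ = (a₁ : ℚ) * a₂ ^ 2) (hm : 2 ≤ m) (heven : 2 ∣ m)
    (c : ℚˣ ⧸ powSubgroup (2 ^ padicValNat 2 m)) :
    c ∈ tildeGamma (negOneAGroup a) m ↔
      (c = 1 ∨ (padicValNat 2 h < padicValNat 2 m ∧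
        ((c = mk (natUnit a₁ ^ (2^(padicValNat 2 m - 1) : ℕ)) ∧
            (if a₁ % 4 = 1 then 0 else if 2 ∣ a₁ then 3 else 2) ≤ padicValNat 2 m) ∨
         (c = mk (-(natUnit a₁ ^ (2^(padicValNat 2 m - 1) : ℕ))) ∧
            (if a₁ % 4 = 1 then 0 else if 2 ∣ a₁ then 3 else 2)
              = padicValNat 2 m + 1)))) := by
  have hα : 1 ≤ padicValNat 2 m := one_le_padicValNat_of_dvd (by omega) heven
  have h2dvd : (2:ℕ) ∣ 2 ^ padicValNat 2 m := dvd_pow_self 2 (by omega)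
  have ha₁0 : a₁ ≠ 0 := by omega
  have hposval : (0:ℚ) < ((natUnit a₁ ^ (2^(padicValNat 2 m - 1) : ℕ) : ℚˣ) : ℚ) := by
    rw [Units.val_pow_eq_pow_val, natUnit_val ha₁0]
    positivity
  have hδpos : deltaClass (2 ^ padicValNat 2 m)
      (mk (natUnit a₁ ^ (2^(padicValNat 2 m - 1) : ℕ))) =
      if a₁ % 4 = 1 then a₁ else 4 * a₁ := by
    have := deltaClass_eval hα ha₁sf ha₁1 (Or.inl rfl)
    rwa [one_mul] at this
  have hδneg : deltaClass (2 ^ padicValNat 2 m)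
      (mk (-(natUnit a₁ ^ (2^(padicValNat 2 m - 1) : ℕ)))) =
      if a₁ % 4 = 1 then a₁ else 4 * a₁ := by
    have := deltaClass_eval hα ha₁sf ha₁1 (Or.inr rfl)
    rwa [neg_one_mul] at this
  have hIpos : IsPosClass (2 ^ padicValNat 2 m)
      (mk (natUnit a₁ ^ (2^(padicValNat 2 m - 1) : ℕ))) :=
    (isPosClass_mk h2dvd _).mpr hposval
  have hIneg : ¬ IsPosClass (2 ^ padicValNat 2 m)
      (mk (-(natUnit a₁ ^ (2^(padicValNat 2 m - 1) : ℕ)))) := by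
    rw [isPosClass_mk h2dvd]
    rw [Units.val_neg]
    linarith
  rw [tildeGamma, Set.mem_setOf_eq]
  constructor
  · rintro ⟨hmem, hsq, hcond⟩
    rcases (torsion_iff ha ha₀pos hnp hh hah ha₁1 ha₂pos hdec hα c).mp ⟨hmem, hsq⟩ with
      rfl | rfl | ⟨hβ, rfl | rfl⟩
    · exact Or.inl rfl
    · exfalso
      have hnotpos : ¬ IsPosClass (2 ^ padicValNat 2 m) (mk (-1)) := by
        rw [isPosClass_mk h2dvd]
        norm_num
      rw [if_neg hnotpos, deltaClass_neg_one hα] at hcond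
      simp [padicValNat.one] at hcond
    · rw [if_pos hIpos, hδpos, v2_delta ha₁sf ha₁1] at hcond
      exact Or.inr ⟨hβ, Or.inl ⟨rfl, hcond⟩⟩
    · rw [if_neg hIneg, hδneg, v2_delta ha₁sf ha₁1] at hcond
      exact Or.inr ⟨hβ, Or.inr ⟨rfl, hcond⟩⟩
  · rintro (rfl | ⟨hβ, ⟨rfl, hle⟩ | ⟨rfl, heq⟩⟩)
    · refine ⟨Subgroup.one_mem _, one_pow 2, ?_⟩
      have hpos1 : IsPosClass (2 ^ padicValNat 2 m) 1 := ⟨1, rfl, by norm_num⟩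
      rw [if_pos hpos1, deltaClass_one]
      simp [padicValNat.one]
    · obtain ⟨hmem, hsq⟩ := (torsion_iff ha ha₀pos hnp hh hah ha₁1 ha₂pos hdec hα _).mpr
        (Or.inr (Or.inr ⟨hβ, Or.inl rfl⟩))
      refine ⟨hmem, hsq, ?_⟩
      rw [if_pos hIpos, hδpos, v2_delta ha₁sf ha₁1]
      exact hle
    · obtain ⟨hmem, hsq⟩ := (torsion_iff ha ha₀pos hnp hh hah ha₁1 ha₂pos hdec hα _).mpr
        (Or.inr (Or.inr ⟨hβ, Or.inr rfl⟩))
      refine ⟨hmem, hsq, ?_⟩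
      rw [if_neg hIneg, hδneg, v2_delta ha₁sf ha₁1]
      exact heq

end NOA
/-- **`tildeΓ(m)` for `Γ = ⟨−1,a⟩` and even `m`**, according to `v₂(m)`. -/
theorem tildeGamma_negOneA (a a₀ a₂ : ℚ) (h a₁ m : ℕ)
    (ha : 0 < a) (ha1 : a ≠ 1) (ha₀pos : 0 < a₀)
    (hnp : ∀ (b : ℚ) (k : ℕ), 2 ≤ k → a₀ ≠ b ^ k)
    (hh : 1 ≤ h) (hah : a = a₀ ^ h)
    (ha₁sf : Squarefree a₁) (ha₁1 : 1 < a₁) (ha₂pos : 0 < a₂)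
    (hdec : a₀ = (a₁ : ℚ) * a₂ ^ 2) (hm : 2 ≤ m) (heven : 2 ∣ m) :
    (padicValNat 2 m = 1 ∧ 2 ∣ h * a₁ →
      tildeGamma (negOneAGroup a) m = {1}) ∧
    (padicValNat 2 m = 1 ∧ ¬ 2 ∣ h * a₁ →
      tildeGamma (negOneAGroup a) m =
        {1, QuotientGroup.mk ((if a₁ % 4 = 1 then 1 else -1) * natUnit a₁)}) ∧
    (padicValNat 2 m = 2 ∧ 4 ∣ h →
      tildeGamma (negOneAGroup a) m = {1}) ∧
    (padicValNat 2 m = 2 ∧ ¬ 2 ∣ a₁ ∧ ¬ 4 ∣ h →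
      tildeGamma (negOneAGroup a) m = {1, QuotientGroup.mk (natUnit a₁ ^ 2)}) ∧
    (padicValNat 2 m = 2 ∧ 2 ∣ a₁ ∧ ¬ 4 ∣ h →
      tildeGamma (negOneAGroup a) m = {1, QuotientGroup.mk (-(natUnit a₁ ^ 2))}) ∧
    (3 ≤ padicValNat 2 m ∧ padicValNat 2 m ≤ padicValNat 2 h →
      tildeGamma (negOneAGroup a) m = {1}) ∧
    (3 ≤ padicValNat 2 m ∧ padicValNat 2 h < padicValNat 2 m →
      tildeGamma (negOneAGroup a) m =
        {1, QuotientGroup.mk (natUnit a₁ ^ 2 ^ (padicValNat 2 m - 1))}) := by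
  have hh0 : h ≠ 0 := by omega
  have hmem := NOA.mem_tilde_iff ha ha₀pos hnp hh hah ha₁sf ha₁1 ha₂pos hdec hm heven
  have h4h : (4 ∣ h) ↔ 2 ≤ padicValNat 2 h := by
    rw [show (4:ℕ) = 2^2 by norm_num]
    exact padicValNat_dvd_iff_le hh0
  have h2h : (2 ∣ h) → 1 ≤ padicValNat 2 h := one_le_padicValNat_of_dvd (by omega)
  refine ⟨?_, ?_, ?_, ?_, ?_, ?_, ?_⟩
  -- Case 1 : v₂(m) = 1, 2 ∣ h·a₁
  · rintro ⟨hv, hha⟩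
    ext c
    rw [hmem c, Set.mem_singleton_iff]
    constructor
    · rintro (rfl | ⟨hβ, ⟨rfl, hle⟩ | ⟨rfl, heq⟩⟩)
      · rfl
      · exfalso
        rw [hv] at hβ hle
        rcases (Nat.prime_two.dvd_mul).mp hha with h2 | h2
        · have := h2h h2; omega
        · split_ifs at hle <;> omega
      · exfalso
        rw [hv] at hβ heq
        rcases (Nat.prime_two.dvd_mul).mp hha with h2 | h2
        · have := h2h h2; omega
        · split_ifs at heq <;> omega
    · rintro rfl; exact Or.inl rfl
  -- Case 2 : v₂(m) = 1, ¬ 2 ∣ h·a₁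
  · rintro ⟨hv, hna⟩
    rw [Nat.prime_two.dvd_mul] at hna
    push_neg at hna
    obtain ⟨h2h', h2a⟩ := hna
    have hB : padicValNat 2 h = 0 := padicValNat.eq_zero_of_not_dvd h2h'
    have hrw : (natUnit a₁ : ℚˣ) ^ ((2:ℕ)^(padicValNat 2 m - 1) : ℕ) = natUnit a₁ := by
      rw [hv]; norm_num
    ext c
    rw [hmem c, Set.mem_insert_iff, Set.mem_singleton_iff, hrw]
    by_cases h4 : a₁ % 4 = 1
    · have hcls : ((if a₁ % 4 = 1 then (1:ℚˣ) else -1) * natUnit a₁) = natUnit a₁ := by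
        rw [if_pos h4, one_mul]
      rw [hcls]
      constructor
      · rintro (rfl | ⟨hβ, ⟨rfl, hle⟩ | ⟨rfl, heq⟩⟩)
        · exact Or.inl rfl
        · exact Or.inr rfl
        · exfalso; rw [hv] at heq; split_ifs at heq <;> omega
      · rintro (rfl | rfl)
        · exact Or.inl rfl
        · exact Or.inr ⟨by omega, Or.inl ⟨rfl, by split_ifs <;> omega⟩⟩
    · have hcls : ((if a₁ % 4 = 1 then (1:ℚˣ) else -1) * natUnit a₁) = -(natUnit a₁) := by
        rw [if_neg h4, neg_one_mul]
      rw [hcls]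
      constructor
      · rintro (rfl | ⟨hβ, ⟨rfl, hle⟩ | ⟨rfl, heq⟩⟩)
        · exact Or.inl rfl
        · exfalso; rw [hv] at hle; split_ifs at hle <;> omega
        · exact Or.inr rfl
      · rintro (rfl | rfl)
        · exact Or.inl rfl
        · refine Or.inr ⟨by omega, Or.inr ⟨rfl, ?_⟩⟩
          rw [hv]; split_ifs <;> omega
  -- Case 3 : v₂(m) = 2, 4 ∣ h
  · rintro ⟨hv, h4⟩
    have hB := h4h.mp h4
    ext c
    rw [hmem c, Set.mem_singleton_iff]
    constructor
    · rintro (rfl | ⟨hβ, _⟩)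
      · rfl
      · exfalso; omega
    · rintro rfl; exact Or.inl rfl
  -- Case 4 : v₂(m) = 2, 2 ∤ a₁, 4 ∤ h
  · rintro ⟨hv, h2a, hn4⟩
    have hB : padicValNat 2 h < 2 := by
      by_contra hge
      exact hn4 (h4h.mpr (by omega))
    have hrw : (natUnit a₁ : ℚˣ) ^ ((2:ℕ)^(padicValNat 2 m - 1) : ℕ) = natUnit a₁ ^ 2 := by
      rw [hv]; norm_num
    ext c
    rw [hmem c, Set.mem_insert_iff, Set.mem_singleton_iff, hrw]
    constructor
    · rintro (rfl | ⟨hβ, ⟨rfl, hle⟩ | ⟨rfl, heq⟩⟩)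
      · exact Or.inl rfl
      · exact Or.inr rfl
      · exfalso; rw [hv] at heq; split_ifs at heq <;> omega
    · rintro (rfl | rfl)
      · exact Or.inl rfl
      · exact Or.inr ⟨by omega, Or.inl ⟨rfl, by rw [hv]; split_ifs <;> omega⟩⟩
  -- Case 5 : v₂(m) = 2, 2 ∣ a₁, 4 ∤ h
  · rintro ⟨hv, h2a, hn4⟩
    have hB : padicValNat 2 h < 2 := by
      by_contra hge
      exact hn4 (h4h.mpr (by omega))
    have hrw : (natUnit a₁ : ℚˣ) ^ ((2:ℕ)^(padicValNat 2 m - 1) : ℕ) = natUnit a₁ ^ 2 := by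
      rw [hv]; norm_num
    ext c
    rw [hmem c, Set.mem_insert_iff, Set.mem_singleton_iff, hrw]
    constructor
    · rintro (rfl | ⟨hβ, ⟨rfl, hle⟩ | ⟨rfl, heq⟩⟩)
      · exact Or.inl rfl
      · exfalso; rw [hv] at hle; split_ifs at hle <;> omega
      · exact Or.inr rfl
    · rintro (rfl | rfl)
      · exact Or.inl rfl
      · exact Or.inr ⟨by omega, Or.inr ⟨rfl, by rw [hv]; split_ifs <;> omega⟩⟩
  -- Case 6 : 3 ≤ v₂(m) ≤ v₂(h)
  · rintro ⟨hv3, hvh⟩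
    ext c
    rw [hmem c, Set.mem_singleton_iff]
    constructor
    · rintro (rfl | ⟨hβ, _⟩)
      · rfl
      · exfalso; omega
    · rintro rfl; exact Or.inl rfl
  -- Case 7 : 3 ≤ v₂(m), v₂(h) < v₂(m)
  · rintro ⟨hv3, hβ'⟩
    ext c
    rw [hmem c, Set.mem_insert_iff, Set.mem_singleton_iff]
    constructor
    · rintro (rfl | ⟨hβ, ⟨rfl, hle⟩ | ⟨rfl, heq⟩⟩)
      · exact Or.inl rfl
      · exact Or.inr rfl
      · exfalso; split_ifs at heq <;> omega
    · rintro (rfl | rfl)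
      · exact Or.inl rfl
      · exact Or.inr ⟨hβ', Or.inl ⟨rfl, by split_ifs <;> omega⟩⟩
end

section
/- Let a ∈ ℚ, a > 0, a ≠ 1, with a = a₀^h and a₀ = a₁·a₂² as in the context, and let m ≥ 1. Assume that one of the following two conditions holds: (1) 3 ∣ h, 3 ∤ m, 3 ∣ a₁, a₁ ∣ 3m, 2 ∤ h, v₂(m) = 1, and 2 ∤ a₁; or (2) 3 ∣ h, 3 ∤ m, 3 ∣ a₁, a₁ ∣ 3m, v₂(h) < v₂(m), and v₂(m) ≠ 1. Then the set of primes p ∉ Supp⟨−1,a⟩ such that [𝔽_p^* : ⟨−1,a⟩_p] = m is finite. -/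
/- Common definitions: finitely generated multiplicative subgroups `Γ ⊆ ℚˣ`,
the quotients `Γ(n) = Γ·(ℚ*)ⁿ/(ℚ*)ⁿ`, the invariants `δ(γ)`, the group `tildeΓ(m)`,
the constants `A(Γ,m)` and `B_{Γ,k}`, and the density `ρ(Γ,m)`. -/

open scoped Classical

section Helpers

variable {p : ℕ} [hp : Fact p.Prime]

/-- Reduction of a rational modulo `p`. -/
def rmap (p : ℕ) (q : ℚ) : ZMod p := (q.num : ZMod p) * ((q.den : ZMod p))⁻¹

lemma den_ne_zero_zmod {q : ℚ} (hd : ¬ p ∣ q.den) : ((q.den : ZMod p)) ≠ 0 := by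
  simpa [ZMod.natCast_eq_zero_iff] using hd

lemma not_dvd_den_mul {q r : ℚ} (hq : ¬ p ∣ q.den) (hr : ¬ p ∣ r.den) : ¬ p ∣ (q * r).den := by
  intro hd
  rcases (Nat.Prime.dvd_mul hp.out).mp (hd.trans (Rat.mul_den_dvd q r)) with h | h
  exacts [hq h, hr h]

lemma rmap_mul {q r : ℚ} (hq : ¬ p ∣ q.den) (hr : ¬ p ∣ r.den) :
    rmap p (q * r) = rmap p q * rmap p r := by
  have h3 := not_dvd_den_mul hq hr
  have key : (((q * r).num : ZMod p)) * (q.den : ZMod p) * (r.den : ZMod p)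
      = (q.num : ZMod p) * (r.num : ZMod p) * ((q * r).den : ZMod p) := by
    exact_mod_cast congrArg (fun z : ℤ => (z : ZMod p)) (Rat.mul_num_den' q r)
  have h1 := den_ne_zero_zmod hq
  have h2 := den_ne_zero_zmod hr
  have h4 := den_ne_zero_zmod h3
  simp only [rmap]
  field_simp
  linear_combination key

lemma not_dvd_den_pow {q : ℚ} (hq : ¬ p ∣ q.den) (n : ℕ) : ¬ p ∣ (q ^ n).den := by
  induction n with
  | zero => simpa using hp.out.ne_one
  | succ n ih =>
      rw [pow_succ]
      exact not_dvd_den_mul ih hq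

lemma rmap_one : rmap p (1 : ℚ) = 1 := by simp [rmap]

lemma rmap_pow {q : ℚ} (hq : ¬ p ∣ q.den) (n : ℕ) : rmap p (q ^ n) = rmap p q ^ n := by
  induction n with
  | zero => simpa using rmap_one
  | succ n ih => rw [pow_succ, rmap_mul (not_dvd_den_pow hq n) hq, ih, pow_succ]

lemma rmap_ne_zero {q : ℚ} (hn : ¬ (p : ℤ) ∣ q.num) (hd : ¬ p ∣ q.den) : rmap p q ≠ 0 := by
  have h1 : (q.num : ZMod p) ≠ 0 := by
    simpa [ZMod.intCast_zmod_eq_zero_iff_dvd] using hn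
  exact mul_ne_zero h1 (inv_ne_zero (den_ne_zero_zmod hd))

lemma rmap_inv {q : ℚ} (hq : q ≠ 0) (hn : ¬ (p : ℤ) ∣ q.num) (hd : ¬ p ∣ q.den) :
    rmap p q⁻¹ = (rmap p q)⁻¹ := by
  have key : (q.den : ℤ) * (q⁻¹.den : ℤ) = q.num * q⁻¹.num := by
    have := Rat.mul_num_den' q q⁻¹
    rw [mul_inv_cancel₀ hq] at this
    simpa using this
  have hd' : ¬ p ∣ q⁻¹.den := by
    intro hdvd
    have hpz : (p : ℤ) ∣ q.num * q⁻¹.num := by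
      rw [← key]; exact Dvd.dvd.mul_left (Int.natCast_dvd_natCast.mpr hdvd) _
    rcases (Int.Prime.dvd_mul' hp.out hpz) with h | h
    · exact hn h
    · have h1 : p ∣ q⁻¹.num.natAbs := Int.ofNat_dvd_left.mp h
      have := Nat.dvd_gcd h1 hdvd
      rw [q⁻¹.reduced] at this
      exact hp.out.ne_one (Nat.dvd_one.mp this)
  have hmul : rmap p q * rmap p q⁻¹ = 1 := by
    have keyz : ((q.den : ZMod p)) * ((q⁻¹.den : ZMod p))
        = ((q.num : ℤ) : ZMod p) * ((q⁻¹.num : ℤ) : ZMod p) := by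
      exact_mod_cast congrArg (fun z : ℤ => (z : ZMod p)) key
    have h1 := den_ne_zero_zmod hd
    have h2 := den_ne_zero_zmod hd'
    have hre : (q.num : ZMod p) * (q.den : ZMod p)⁻¹ *
        ((q⁻¹.num : ZMod p) * (q⁻¹.den : ZMod p)⁻¹)
        = ((q.num : ZMod p) * (q⁻¹.num : ZMod p)) *
          (((q.den : ZMod p)) * ((q⁻¹.den : ZMod p)))⁻¹ := by
      rw [mul_inv]; ring
    rw [rmap, rmap, hre, ← keyz, mul_inv_cancel₀ (mul_ne_zero h1 h2)]
  exact eq_inv_of_mul_eq_one_right hmul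

lemma rmap_neg_one : rmap p (-1 : ℚ) = -1 := by
  simp [rmap]

lemma not_dvd_num_den_of_val_zero {q : ℚ} (hq : q ≠ 0) (hv : padicValRat p q = 0) :
    ¬ (p : ℤ) ∣ q.num ∧ ¬ p ∣ q.den := by
  have hnum0 : q.num ≠ 0 := Rat.num_ne_zero.mpr hq
  constructor
  · intro hdvd
    have h1 : p ∣ q.num.natAbs := Int.ofNat_dvd_left.mp hdvd
    have hden : ¬ p ∣ q.den := by
      intro hd
      have := Nat.dvd_gcd h1 hd
      rw [q.reduced] at this
      exact hp.out.ne_one (Nat.dvd_one.mp this)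
    have h2 : padicValNat p q.den = 0 := padicValNat.eq_zero_of_not_dvd hden
    have h3 : 1 ≤ padicValInt p q.num := by
      have : 1 ≤ padicValNat p q.num.natAbs :=
        one_le_padicValNat_of_dvd (Int.natAbs_pos.mpr hnum0).ne' h1
      simpa [padicValInt] using this
    rw [padicValRat_def, h2] at hv
    omega
  · intro hdvd
    have h1 : ¬ p ∣ q.num.natAbs := by
      intro hn
      have := Nat.dvd_gcd hn hdvd
      rw [q.reduced] at this
      exact hp.out.ne_one (Nat.dvd_one.mp this)
    have h2 : padicValInt p q.num = 0 := by
      simpa [padicValInt] using padicValNat.eq_zero_of_not_dvd h1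
    have h3 : 1 ≤ padicValNat p q.den :=
      one_le_padicValNat_of_dvd q.pos.ne' hdvd
    rw [padicValRat_def, h2] at hv
    omega

end Helpers

/-- **Theorem (finiteness of `{p : [𝔽_p^* : ⟨−1,a⟩_p] = m}` in the vanishing cases).** -/
theorem finite_index_set_negOneA (a a₀ a₂ : ℚ) (h a₁ m : ℕ)
    (ha : 0 < a) (ha1 : a ≠ 1) (ha₀pos : 0 < a₀)
    (hnp : ∀ (b : ℚ) (k : ℕ), 2 ≤ k → a₀ ≠ b ^ k)
    (hh : 1 ≤ h) (hah : a = a₀ ^ h)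
    (ha₁sf : Squarefree a₁) (ha₁1 : 1 < a₁) (ha₂pos : 0 < a₂)
    (hdec : a₀ = (a₁ : ℚ) * a₂ ^ 2) (hm : 1 ≤ m)
    (hcond :
      (3 ∣ h ∧ ¬ 3 ∣ m ∧ 3 ∣ a₁ ∧ a₁ ∣ 3 * m ∧
        ¬ 2 ∣ h ∧ padicValNat 2 m = 1 ∧ ¬ 2 ∣ a₁) ∨
      (3 ∣ h ∧ ¬ 3 ∣ m ∧ 3 ∣ a₁ ∧ a₁ ∣ 3 * m ∧
        padicValNat 2 h < padicValNat 2 m ∧ padicValNat 2 m ≠ 1)) :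
    {p : ℕ | p.Prime ∧ p ∉ suppGamma (negOneAGroup a) ∧
      (reductionGamma (negOneAGroup a) p).index = m}.Finite := by
  have hempty : {p : ℕ | p.Prime ∧ p ∉ suppGamma (negOneAGroup a) ∧
      (reductionGamma (negOneAGroup a) p).index = m} = ∅ := by
    ext p
    simp only [Set.mem_setOf_eq, Set.mem_empty_iff_false, iff_false, not_and]
    intro hp hsupp hidx
    obtain ⟨h3h, h3m, h3a1, ha1m, hcase⟩ :
        3 ∣ h ∧ ¬ 3 ∣ m ∧ 3 ∣ a₁ ∧ a₁ ∣ 3 * m ∧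
          ((¬ 2 ∣ h ∧ padicValNat 2 m = 1 ∧ ¬ 2 ∣ a₁) ∨
           (padicValNat 2 h < padicValNat 2 m ∧ padicValNat 2 m ≠ 1)) := by
      tauto
    haveI : Fact p.Prime := ⟨hp⟩
    have hane : a ≠ 0 := ne_of_gt ha
    have hua : (Units.mk0 a hane) ∈ negOneAGroup a :=
      Subgroup.subset_closure (Or.inr rfl)
    have hum1 : (-1 : ℚˣ) ∈ negOneAGroup a :=
      Subgroup.subset_closure (Or.inl (by simp))
    -- all elements of Γ have p-adic valuation 0
    have hval : ∀ γ : ℚˣ, γ ∈ negOneAGroup a → padicValRat p (γ : ℚ) = 0 := by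
      intro γ hγ
      by_contra hne
      exact hsupp ⟨hp, γ, hγ, hne⟩
    have hva : padicValRat p a = 0 := hval _ hua
    have ha₀ne : a₀ ≠ 0 := ne_of_gt ha₀pos
    have ha₂ne : a₂ ≠ 0 := ne_of_gt ha₂pos
    have hva0 : padicValRat p a₀ = 0 := by
      have hpow : padicValRat p (a₀ ^ h) = h * padicValRat p a₀ := padicValRat.pow a₀
      rw [← hah, hva] at hpow
      rcases mul_eq_zero.mp hpow.symm with h0 | h0
      · exfalso; simp only [Nat.cast_eq_zero] at h0; omega
      · exact h0
    have hva12 : (0 : ℤ) = (padicValNat p a₁ : ℤ) + 2 * padicValRat p a₂ := by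
      have h1 : padicValRat p a₀ = padicValRat p (a₁ : ℚ) + padicValRat p (a₂ ^ 2) := by
        rw [hdec]
        exact padicValRat.mul (by positivity) (by positivity)
      rw [padicValRat.pow a₂, padicValRat.of_nat, hva0] at h1
      rw [h1]; push_cast; ring
    have hpa1 : ¬ p ∣ a₁ := by
      intro hdvd
      have hle : padicValNat p a₁ ≤ 1 := by
        by_contra hgt
        have hsq : p * p ∣ a₁ := by
          have h2 : p ^ 2 ∣ p ^ padicValNat p a₁ := pow_dvd_pow p (by omega)
          have := h2.trans pow_padicValNat_dvd
          rwa [pow_two] at this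
        exact hp.ne_one (Nat.isUnit_iff.mp (ha₁sf p hsq))
      have hge : 1 ≤ padicValNat p a₁ :=
        one_le_padicValNat_of_dvd (by omega) hdvd
      have h1 : padicValNat p a₁ = 1 := by omega
      rw [h1] at hva12
      omega
    have hva2 : padicValRat p a₂ = 0 := by
      rw [padicValNat.eq_zero_of_not_dvd hpa1] at hva12
      omega
    have hp3 : p ≠ 3 := fun h3 => hpa1 (h3 ▸ h3a1)
    have ga := not_dvd_num_den_of_val_zero hane hva
    have g0 := not_dvd_num_den_of_val_zero ha₀ne hva0
    have g2 := not_dvd_num_den_of_val_zero ha₂ne hva2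
    -- cardinalities
    have hNcard : Nat.card (ZMod p)ˣ = p - 1 := by
      rw [Nat.card_eq_fintype_card, ZMod.card_units_eq_totient, Nat.totient_prime hp]
    have hEq : m * Nat.card (reductionGamma (negOneAGroup a) p) = p - 1 := by
      rw [← hidx, Subgroup.index_mul_card, hNcard]
    have hmdvd : m ∣ p - 1 := ⟨_, hEq.symm⟩
    have h2m : 2 ∣ m := by
      rcases hcase with ⟨_, hv, _⟩ | ⟨hv, _⟩
      · exact dvd_of_one_le_padicValNat (by omega)
      · exact dvd_of_one_le_padicValNat (by omega)
    have hp2 : p ≠ 2 := by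
      intro h2
      subst h2
      have h1 : m ∣ 1 := hmdvd
      have := Nat.le_of_dvd one_pos h1
      omega
    have hpge3 : 3 ≤ p := by
      have := hp.two_le
      omega
    haveI : Fact (2 < p) := ⟨by omega⟩
    -- reductions mod p
    set A0 : ZMod p := rmap p a₀ with hA0
    have hA0ne : A0 ≠ 0 := rmap_ne_zero g0.1 g0.2
    have hAa : rmap p a = A0 ^ h := by rw [hah]; exact rmap_pow g0.2 h
    have hAane : rmap p a ≠ 0 := by rw [hAa]; exact pow_ne_zero _ hA0ne
    have hxa : (Units.mk0 (rmap p a) hAane) ∈ reductionGamma (negOneAGroup a) p :=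
      Subgroup.subset_closure ⟨Units.mk0 a hane, hua, rfl⟩
    have hxm1 : (-1 : (ZMod p)ˣ) ∈ reductionGamma (negOneAGroup a) p := by
      apply Subgroup.subset_closure
      refine ⟨-1, hum1, ?_⟩
      show ((-1 : (ZMod p)ˣ) : ZMod p) = (((-1 : ℚˣ) : ℚ).num : ZMod p) *
        ((((-1 : ℚˣ) : ℚ).den : ZMod p))⁻¹
      norm_num
    set c := Nat.card (reductionGamma (negOneAGroup a) p) with hc
    have hlag : ∀ x : (ZMod p)ˣ, x ∈ reductionGamma (negOneAGroup a) p → x ^ c = 1 := by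
      intro x hx
      have h1 : (⟨x, hx⟩ : reductionGamma (negOneAGroup a) p) ^ c = 1 := pow_card_eq_one'
      simpa [Subtype.ext_iff] using h1
    have hceven : Even c := by
      have h1 : ((-1 : (ZMod p)ˣ)) ^ c = 1 := hlag _ hxm1
      have h2 : ((-1 : ZMod p)) ^ c = 1 := by
        have := congrArg Units.val h1
        simpa using this
      exact (neg_one_pow_eq_one_iff_even (ZMod.neg_one_ne_one)).mp h2
    have hpm4 : 2 ^ (padicValNat 2 m + 1) ∣ p - 1 := by
      obtain ⟨c', hc'⟩ := hceven
      obtain ⟨m'', hm''⟩ := pow_padicValNat_dvd (p := 2) (n := m)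
      refine ⟨m'' * c', ?_⟩
      calc p - 1 = m * c := hEq.symm
        _ = (2 ^ padicValNat 2 m * m'') * (c' + c') := by rw [← hm'', ← hc']
        _ = 2 ^ (padicValNat 2 m + 1) * (m'' * c') := by ring
    have hv2m1 : 1 ≤ padicValNat 2 m := by
      rcases hcase with ⟨_, hv, _⟩ | ⟨hv, _⟩ <;> omega
    have h4dvd : 4 ∣ p - 1 := by
      have h1 : (2 : ℕ) ^ 2 ∣ 2 ^ (padicValNat 2 m + 1) := pow_dvd_pow 2 (by omega)
      have := h1.trans hpm4
      simpa using this
    have hp41 : p % 4 = 1 := by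
      obtain ⟨k, hk⟩ := h4dvd
      omega
    -- a₁ is a square mod p
    obtain ⟨h', hh'⟩ := pow_padicValNat_dvd (p := 2) (n := h)
    have hh'odd : ¬ 2 ∣ h' := by
      intro h2
      obtain ⟨t, ht⟩ := h2
      have hdd : 2 ^ (padicValNat 2 h + 1) ∣ h := by
        refine ⟨t, ?_⟩
        calc h = 2 ^ padicValNat 2 h * h' := hh'
          _ = 2 ^ (padicValNat 2 h + 1) * t := by rw [ht]; ring
      exact pow_succ_padicValNat_not_dvd (p := 2) (by omega : h ≠ 0) hdd
    have hj1m : 2 ^ (padicValNat 2 h + 1) ∣ m := by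
      rcases hcase with ⟨h2h, hv2m, _⟩ | ⟨hlt, _⟩
      · have hj0 : padicValNat 2 h = 0 := padicValNat.eq_zero_of_not_dvd h2h
        rw [hj0, zero_add, pow_one]
        exact h2m
      · exact (pow_dvd_pow 2 (by omega)).trans pow_padicValNat_dvd
    obtain ⟨m', hm'⟩ := hj1m
    have hA0c : A0 ^ (h * c) = 1 := by
      have h1 := hlag _ hxa
      have h2 : (rmap p a) ^ c = 1 := by
        have := congrArg Units.val h1
        simpa using this
      rw [hAa, ← pow_mul] at h2
      exact h2
    have hfermat : A0 ^ (p - 1) = 1 := ZMod.pow_card_sub_one_eq_one hA0ne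
    set s : ZMod p := A0 ^ (2 ^ padicValNat 2 h * (m' * c)) with hs
    have hs2 : s * s = 1 := by
      rw [hs, ← pow_add, ← hfermat]
      congr 1
      rw [← hEq, hm']
      ring
    have hsh : s ^ h' = 1 := by
      rw [hs, ← pow_mul]
      have he : 2 ^ padicValNat 2 h * (m' * c) * h' = h * c * m' := by
        conv_rhs => rw [hh']
        ring
      rw [he, pow_mul, hA0c, one_pow]
    have hs1 : s = 1 := by
      rcases mul_self_eq_one_iff.mp hs2 with h1 | h1
      · exact h1
      · exfalso
        rw [h1, (Nat.odd_iff.mpr (by omega)).neg_one_pow] at hsh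
        exact ZMod.neg_one_ne_one hsh
    have hsq0 : IsSquare A0 := by
      rw [ZMod.euler_criterion p hA0ne]
      have hexp : p / 2 = 2 ^ padicValNat 2 h * (m' * c) := by
        have h1 : p - 1 = 2 * (2 ^ padicValNat 2 h * (m' * c)) := by
          rw [← hEq, hm']; ring
        omega
      rw [hexp]
      exact hs1
    have hden1 : ¬ p ∣ ((a₁ : ℚ)).den := by
      rw [Rat.den_natCast]
      simpa using hp.ne_one
    have hsplit : A0 = (a₁ : ZMod p) * (rmap p a₂) ^ 2 := by
      rw [hA0, hdec, rmap_mul hden1 (not_dvd_den_pow g2.2 2), rmap_pow g2.2]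
      congr 1
      simp [rmap, Rat.num_natCast, Rat.den_natCast]
    have hrma2ne : rmap p a₂ ≠ 0 := rmap_ne_zero g2.1 g2.2
    have hsqa1 : IsSquare ((a₁ : ℕ) : ZMod p) := by
      obtain ⟨t, ht⟩ := hsq0
      refine ⟨t * (rmap p a₂)⁻¹, ?_⟩
      have h1 : (a₁ : ZMod p) = A0 * ((rmap p a₂)⁻¹) ^ 2 := by
        rw [hsplit]
        field_simp
      rw [h1, ht]
      ring
    -- 3 does not divide p - 1
    have h3N : ¬ 3 ∣ (p - 1) := by
      intro h3dvd
      obtain ⟨N3, hN3⟩ := h3dvd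
      have hN3even : Even N3 := by
        obtain ⟨u, hu⟩ := h4dvd
        rw [Nat.even_iff]
        omega
      obtain ⟨h₃, hh₃⟩ := h3h
      have hkey : ∀ γ : ℚˣ, γ ∈ negOneAGroup a → (rmap p (γ : ℚ)) ^ N3 = 1 := by
        intro γ hγ
        have hγ' : γ ∈ Subgroup.closure {u : ℚˣ | (u : ℚ) = -1 ∨ (u : ℚ) = a} := hγ
        refine Subgroup.closure_induction ?_ ?_ ?_ ?_ hγ'
        · intro x hx
          rcases hx with hx | hx
          · rw [hx, rmap_neg_one, hN3even.neg_one_pow]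
          · rw [hx, hAa, ← pow_mul]
            have he : h * N3 = (p - 1) * h₃ := by rw [hN3, hh₃]; ring
            rw [he, pow_mul, hfermat, one_pow]
        · rw [Units.val_one, rmap_one, one_pow]
        · intro x y hxm hym ihx ihy
          have gx := not_dvd_num_den_of_val_zero (Units.ne_zero x) (hval x hxm)
          have gy := not_dvd_num_den_of_val_zero (Units.ne_zero y) (hval y hym)
          rw [Units.val_mul, rmap_mul gx.2 gy.2, mul_pow, ihx, ihy, one_mul]
        · intro x hxm ihx
          have gx := not_dvd_num_den_of_val_zero (Units.ne_zero x) (hval x hxm)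
          rw [Units.val_inv_eq_inv_val, rmap_inv (Units.ne_zero x) gx.1 gx.2,
            inv_pow, ihx, inv_one]
      have hle : reductionGamma (negOneAGroup a) p ≤ (powMonoidHom N3 : (ZMod p)ˣ →* (ZMod p)ˣ).ker := by
        apply (Subgroup.closure_le _).mpr
        rintro x ⟨γ, hγ, hxval⟩
        have hx1 : x ^ N3 = 1 := by
          apply Units.ext
          rw [Units.val_pow_eq_pow_val, hxval, Units.val_one]
          exact hkey γ hγ
        exact hx1
      obtain ⟨ζ, hζ⟩ := IsCyclic.exists_generator (α := (ZMod p)ˣ)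
      have htop : Subgroup.zpowers ζ = (⊤ : Subgroup (ZMod p)ˣ) := by
        rw [Subgroup.eq_top_iff']
        exact hζ
      have horder : orderOf ζ = p - 1 := by
        rw [← Nat.card_zpowers, htop, Subgroup.card_top]
        exact hNcard
      have hrange : (powMonoidHom N3 : (ZMod p)ˣ →* (ZMod p)ˣ).range
          = Subgroup.zpowers (ζ ^ N3) := by
        rw [MonoidHom.range_eq_map, ← htop, MonoidHom.map_zpowers]
        rfl
      have hN3pos : 0 < N3 := by omega
      have hcard3 : Nat.card (powMonoidHom N3 : (ZMod p)ˣ →* (ZMod p)ˣ).range = 3 := by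
        rw [hrange, Nat.card_zpowers, orderOf_pow, horder,
          Nat.gcd_eq_right ⟨3, by omega⟩]
        exact Nat.div_eq_of_eq_mul_left hN3pos hN3
      have h3idx : (3 : ℕ) ∣ m := by
        rw [← hidx]
        have h1 := Subgroup.index_dvd_of_le hle
        rwa [Subgroup.index_ker, hcard3] at h1
      exact h3m h3idx
    have hp32 : p % 3 = 2 := by
      have hnd : ¬ 3 ∣ p := by
        intro hdvd
        exact hp3 (((Nat.prime_dvd_prime_iff_eq (by norm_num) hp).mp hdvd).symm)
      omega
    -- the Jacobi symbol computation
    set b := a₁ / 3 with hb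
    have hab : a₁ = 3 * b := (Nat.mul_div_cancel' h3a1).symm
    have hbm : b ∣ m := by
      have h1 := ha1m
      rw [hab] at h1
      exact (mul_dvd_mul_iff_left (by norm_num : (3 : ℕ) ≠ 0)).mp h1
    have ha1zmod : ((a₁ : ℕ) : ZMod p) ≠ 0 := by
      rw [Ne, ZMod.natCast_eq_zero_iff]
      exact hpa1
    have hleg : legendreSym p a₁ = 1 := (legendreSym.eq_one_iff' p ha1zmod).mpr hsqa1
    rw [jacobiSym.legendreSym.to_jacobiSym] at hleg
    have haux : ∀ n : ℕ, ¬ 2 ∣ n → n ∣ p - 1 → jacobiSym (n : ℤ) p = 1 := by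
      intro n hodd hdvd
      have hn0 : n ≠ 0 := by
        rintro rfl
        exact hodd (dvd_zero 2)
      rcases eq_or_ne n 1 with rfl | hn1
      · exact jacobiSym.one_left p
      · have h2n : 2 ≤ n := by omega
        obtain ⟨k, hk⟩ := hdvd
        have hmodn : p % n = 1 := by
          have hp1 : p = n * k + 1 := by omega
          rw [hp1, Nat.mul_add_mod]
          exact Nat.mod_eq_of_lt (by omega)
        have hmod : (p : ℤ) % (n : ℤ) = 1 := by
          rw [← Int.natCast_mod, hmodn]
          norm_num
        calc jacobiSym (n : ℤ) p
            = jacobiSym (p : ℤ) n :=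
              jacobiSym.quadratic_reciprocity_one_mod_four' (Nat.odd_iff.mpr (by omega)) hp41
          _ = jacobiSym ((p : ℤ) % n) n := jacobiSym.mod_left _ _
          _ = jacobiSym 1 n := by rw [hmod]
          _ = 1 := jacobiSym.one_left n
    have hj3 : jacobiSym (3 : ℤ) p = -1 := by
      have h1 : jacobiSym ((3 : ℕ) : ℤ) p = jacobiSym (p : ℤ) 3 :=
        jacobiSym.quadratic_reciprocity_one_mod_four' (by decide) hp41
      have h3 : jacobiSym (p : ℤ) 3 = jacobiSym 2 3 :=
        jacobiSym.mod_left' (by omega)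
      have h4 : jacobiSym 2 3 = -1 := by
        rw [jacobiSym.at_two (by decide)]
        decide
      push_cast at h1
      rw [h1, h3, h4]
    have hja1 : jacobiSym (a₁ : ℤ) p = -1 := by
      have hcast : ((a₁ : ℕ) : ℤ) = (3 : ℤ) * (b : ℤ) := by
        exact_mod_cast congrArg (fun n : ℕ => (n : ℤ)) hab
      rw [hcast, jacobiSym.mul_left, hj3]
      have hjb : jacobiSym (b : ℤ) p = 1 := by
        rcases Nat.even_or_odd b with hbeven | hbodd
        · -- b even: we are in case 2 and p ≡ 1 mod 8
          have h2b : 2 ∣ b := hbeven.two_dvd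
          have h2a1 : 2 ∣ a₁ := by
            rw [hab]
            exact Dvd.dvd.mul_left h2b 3
          have hcase2 : padicValNat 2 h < padicValNat 2 m ∧ padicValNat 2 m ≠ 1 := by
            rcases hcase with ⟨_, _, hno⟩ | h2
            · exact absurd h2a1 hno
            · exact h2
          have h8 : 8 ∣ p - 1 := by
            have h1 : (2 : ℕ) ^ 3 ∣ 2 ^ (padicValNat 2 m + 1) := pow_dvd_pow 2 (by omega)
            have := h1.trans hpm4
            simpa using this
          have hp81 : p % 8 = 1 := by
            obtain ⟨k, hk⟩ := h8
            omega
          set cc := b / 2 with hcc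
          have hbcc : b = 2 * cc := (Nat.mul_div_cancel' h2b).symm
          have hbsf : Squarefree b := ha₁sf.squarefree_of_dvd ⟨3, by rw [hab]; ring⟩
          have hccodd : ¬ 2 ∣ cc := by
            intro h2cc
            obtain ⟨t, ht⟩ := h2cc
            exact (Nat.squarefree_iff_prime_squarefree.mp hbsf 2 Nat.prime_two)
              ⟨t, by rw [hbcc, ht]; ring⟩
          have hccdvd : cc ∣ p - 1 :=
            dvd_trans (dvd_trans ⟨2, by omega⟩ hbm) hmdvd
          have h2p : jacobiSym 2 p = 1 := by
            rw [jacobiSym.at_two (Nat.odd_iff.mpr (by omega))]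
            have hcast8 : ((p : ℕ) : ZMod 8) = 1 := by
              rw [← ZMod.natCast_mod, hp81]
              simp
            rw [hcast8]
            decide
          have hcastb : ((b : ℕ) : ℤ) = (2 : ℤ) * (cc : ℤ) := by
            exact_mod_cast congrArg (fun n : ℕ => (n : ℤ)) hbcc
          rw [hcastb, jacobiSym.mul_left, h2p, haux cc hccodd hccdvd]
          norm_num
        · have hbo : ¬ 2 ∣ b := by
            rw [Nat.odd_iff] at hbodd
            omega
          exact haux b hbo (hbm.trans hmdvd)
      rw [hjb]
      norm_num
    rw [hleg] at hja1
    norm_num at hja1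
  rw [hempty]
  exact Set.finite_empty
end

section
/- Let Γ ⊂ ℚ* be a finitely generated subgroup and let m ≥ 1 with v₂(m) = 1. Then |Γ(2)| = 2 and tildeΓ(2m) = Γ(4) hold if and only if the following three conditions hold: (1) Γ(2) = {(ℚ*)², −(ℚ*)²}; (2) every element of Γ(4) is of the form γ₀²·(ℚ*)⁴ or −4γ₀²·(ℚ*)⁴ with γ₀ an odd squarefree positive integer; (3) Γ(4) contains at least one element of the form −4γ₀²·(ℚ*)⁴ with γ₀ an odd squarefree positive integer. -/
/- Common definitions: finitely generated multiplicative subgroups `Γ ⊆ ℚˣ`,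
the quotients `Γ(n) = Γ·(ℚ*)ⁿ/(ℚ*)ⁿ`, the invariants `δ(γ)`, the group `tildeΓ(m)`,
the constants `A(Γ,m)` and `B_{Γ,k}`, and the density `ρ(Γ,m)`. -/

open scoped Classical

-- helper lemmas
lemma mem_powSubgroup {n : ℕ} {x : ℚˣ} : x ∈ powSubgroup n ↔ ∃ y : ℚˣ, y ^ n = x := by
  simp [powSubgroup, powMonoidHom]

lemma mk_eq_mk {n : ℕ} {a b : ℚˣ} :
    (QuotientGroup.mk a : ℚˣ ⧸ powSubgroup n) = QuotientGroup.mk b ↔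
      ∃ y : ℚˣ, b = a * y ^ n := by
  rw [QuotientGroup.eq]
  constructor
  · rintro h
    obtain ⟨y, hy⟩ := mem_powSubgroup.1 h
    exact ⟨y, by rw [hy]; group⟩
  · rintro ⟨y, rfl⟩
    exact mem_powSubgroup.2 ⟨y, by group⟩

lemma natUnit_val {g : ℕ} (hg : g ≠ 0) : ((natUnit g : ℚˣ) : ℚ) = g := by
  simp [natUnit, intUnit, hg]

lemma unit_pos_or_neg (x : ℚˣ) : 0 < (x : ℚ) ∨ (x : ℚ) < 0 :=
  (lt_or_gt_of_ne x.ne_zero).symm.imp id id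

lemma sign_eq {a b : ℚˣ} (h : (QuotientGroup.mk a : ℚˣ ⧸ powSubgroup 4) = QuotientGroup.mk b) :
    (0 < (a : ℚ) ↔ 0 < (b : ℚ)) := by
  obtain ⟨y, rfl⟩ := mk_eq_mk.1 h
  have hy0 : (y:ℚ) ≠ 0 := y.ne_zero
  have hy : (0:ℚ) < (y:ℚ)^4 := by positivity
  push_cast
  constructor
  · intro ha; nlinarith
  · intro hab
    by_contra hna
    have := (unit_pos_or_neg a).resolve_left hna
    nlinarith

lemma sf_nat_eq {a b : ℕ} (ha : Squarefree a) (hb : Squarefree b) {c : ℕ}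
    (h : a * b = c ^ 2) : a = b := by
  have ha0 : a ≠ 0 := ha.ne_zero
  have hb0 : b ≠ 0 := hb.ne_zero
  apply Nat.eq_of_factorization_eq ha0 hb0
  intro p
  have h1 := ha.natFactorization_le_one p
  have h2 := hb.natFactorization_le_one p
  have h3 : a.factorization p + b.factorization p = 2 * c.factorization p := by
    have := congrArg (fun n => n.factorization p) h
    simpa [Nat.factorization_mul ha0 hb0, Nat.factorization_pow, mul_comm] using this
  omega

lemma sf_rat_eq {a b : ℕ} (ha : Squarefree a) (hb : Squarefree b) (t : ℚ)
    (h : (b : ℚ) = a * t ^ 2) : a = b := by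
  set q : ℚ := (a : ℚ) * t with hqdef
  have key : q ^ 2 = ((a * b : ℕ) : ℚ) := by push_cast; rw [hqdef, h]; ring
  have hq : ∃ z : ℤ, q = z := by
    by_contra hno
    have hirr : Irrational ((q : ℝ)) :=
      irrational_nrt_of_notint_nrt 2 ((a * b : ℕ) : ℤ)
        (by exact_mod_cast congrArg (fun r : ℚ => (r : ℝ)) key)
        (fun ⟨y, hy⟩ => hno ⟨y, by exact_mod_cast hy⟩) two_pos
    exact (Rat.not_irrational q) hirr
  obtain ⟨z, hz⟩ := hq
  have hz2 : (z : ℤ) ^ 2 = (a * b : ℕ) := by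
    have : (z : ℚ) ^ 2 = ((a * b : ℕ) : ℚ) := by rw [← hz]; exact key
    exact_mod_cast this
  have hnat : a * b = z.natAbs ^ 2 := by
    have := congrArg Int.natAbs hz2
    simpa [Int.natAbs_pow, Int.natAbs_mul] using this.symm
  exact sf_nat_eq ha hb hnat

lemma exists_sf_decomp (y : ℚ) (hy : y ≠ 0) :
    ∃ g : ℕ, Squarefree g ∧ ∃ t : ℚ, t ≠ 0 ∧ |y| = g * t ^ 2 := by
  set p := y.num.natAbs with hpdef
  set q := y.den with hqdef
  have hp : p ≠ 0 := by simpa [hpdef, Int.natAbs_eq_zero] using Rat.num_ne_zero.2 hy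
  have hq : q ≠ 0 := y.den_nz
  obtain ⟨g, b, hgb, hsf⟩ := Nat.sq_mul_squarefree (p * q)
  have hb : b ≠ 0 := by
    rintro rfl
    simp at hgb
    exact hgb.elim hp hq
  have hg : g ≠ 0 := by
    rintro rfl
    simp at hgb
    exact hgb.elim hp hq
  have habs : |y| = (p : ℚ) / q := by
    rw [← Rat.num_div_den y, abs_div, abs_of_nonneg (by positivity : (0:ℚ) ≤ (y.den : ℚ))]
    congr 1
    simp [hpdef, Nat.cast_natAbs]
  refine ⟨g, hsf, (b : ℚ) / q, by positivity, ?_⟩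
  have hcast : ((b : ℚ)) ^ 2 * g = p * q := by exact_mod_cast hgb
  rw [habs]
  have hq' : (q : ℚ) ≠ 0 := Nat.cast_ne_zero.2 hq
  field_simp
  linear_combination hcast.symm

lemma natUnit_one : natUnit 1 = 1 := by
  ext; rw [natUnit_val one_ne_zero]; norm_num

lemma natUnit_pos {g : ℕ} (hg : g ≠ 0) : 0 < ((natUnit g : ℚˣ) : ℚ) := by
  rw [natUnit_val hg]; exact_mod_cast Nat.pos_of_ne_zero hg

lemma sq_val_eq {g g' : ℕ} (hg : Squarefree g) (hg' : Squarefree g') {y : ℚˣ}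
    (h : ((g' : ℚ)) ^ 2 = (g : ℚ) ^ 2 * (y : ℚ) ^ 4) : g = g' := by
  set t : ℚ := (y : ℚ) with ht
  have hg0 : (0:ℚ) < g := by exact_mod_cast Nat.pos_of_ne_zero hg.ne_zero
  have hg'0 : (0:ℚ) < g' := by exact_mod_cast Nat.pos_of_ne_zero hg'.ne_zero
  have ht0 : t ≠ 0 := y.ne_zero
  have hfac : ((g' : ℚ) - g * t ^ 2) * ((g' : ℚ) + g * t ^ 2) = 0 := by
    linear_combination h
  rcases mul_eq_zero.1 hfac with h0 | h0
  · exact sf_rat_eq hg hg' t (by linarith)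
  · exfalso
    have : (0:ℚ) < g * t ^ 2 := by positivity
    linarith

lemma mk_sq_eq_mk_sq {g g' : ℕ} (hg : Squarefree g) (hg' : Squarefree g')
    (h : (QuotientGroup.mk (natUnit g ^ 2) : ℚˣ ⧸ powSubgroup 4) =
      QuotientGroup.mk (natUnit g' ^ 2)) : g = g' := by
  obtain ⟨y, hy⟩ := mk_eq_mk.1 h
  apply sq_val_eq hg hg'
  have := congrArg (fun u : ℚˣ => (u : ℚ)) hy
  simpa [natUnit_val hg.ne_zero, natUnit_val hg'.ne_zero, mul_pow] using this

lemma mk_neg_sq_eq_mk_neg_sq {g g' : ℕ} (hg : Squarefree g) (hg' : Squarefree g')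
    (h : (QuotientGroup.mk (-(natUnit g ^ 2)) : ℚˣ ⧸ powSubgroup 4) =
      QuotientGroup.mk (-(natUnit g' ^ 2))) : g = g' := by
  obtain ⟨y, hy⟩ := mk_eq_mk.1 h
  apply sq_val_eq hg hg'
  have := congrArg (fun u : ℚˣ => (u : ℚ)) hy
  simp only [Units.val_neg, Units.val_mul, Units.val_pow_eq_pow_val] at this
  rw [natUnit_val hg.ne_zero, natUnit_val hg'.ne_zero] at this
  linear_combination -this

lemma mk_sq_ne_mk_neg_sq {g g' : ℕ} (hg : g ≠ 0) (hg' : g' ≠ 0) :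
    (QuotientGroup.mk (natUnit g ^ 2) : ℚˣ ⧸ powSubgroup 4) ≠
      QuotientGroup.mk (-(natUnit g' ^ 2)) := by
  intro h
  have := (sign_eq h).1 (by
    have := natUnit_pos hg
    simp only [Units.val_pow_eq_pow_val]
    positivity)
  simp only [Units.val_neg, Units.val_pow_eq_pow_val] at this
  have h2 : (0:ℚ) < ((natUnit g' : ℚˣ) : ℚ) ^ 2 := by
    have := natUnit_pos hg'
    positivity
  linarith

lemma mk_sq_eq_one_iff {g : ℕ} (hg : Squarefree g)
    (h : (QuotientGroup.mk (natUnit g ^ 2) : ℚˣ ⧸ powSubgroup 4) = 1) : g = 1 := by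
  have h1 : (1 : ℚˣ ⧸ powSubgroup 4) = QuotientGroup.mk (natUnit 1 ^ 2) := by
    rw [natUnit_one]; simp
  exact mk_sq_eq_mk_sq hg squarefree_one (h.trans h1)

lemma mk_neg_sq_ne_one {g : ℕ} (hg : g ≠ 0) :
    (QuotientGroup.mk (-(natUnit g ^ 2)) : ℚˣ ⧸ powSubgroup 4) ≠ 1 := by
  intro h
  have h1 : (1 : ℚˣ ⧸ powSubgroup 4) = QuotientGroup.mk (natUnit 1 ^ 2) := by
    rw [natUnit_one]; simp
  exact mk_sq_ne_mk_neg_sq one_ne_zero hg (h1.symm.trans h.symm).symm.symm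

lemma two_torsion_form (x : ℚˣ) (h : (QuotientGroup.mk x : ℚˣ ⧸ powSubgroup 4) ^ 2 = 1) :
    ∃ g : ℕ, Squarefree g ∧
      ((QuotientGroup.mk x : ℚˣ ⧸ powSubgroup 4) = QuotientGroup.mk (natUnit g ^ 2) ∨
       (QuotientGroup.mk x : ℚˣ ⧸ powSubgroup 4) = QuotientGroup.mk (-(natUnit g ^ 2))) := by
  have h2 : x ^ 2 ∈ powSubgroup 4 := by
    rwa [← QuotientGroup.eq_one_iff, QuotientGroup.mk_pow]
  obtain ⟨y, hy⟩ := mem_powSubgroup.1 h2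
  have hval : (x : ℚ) ^ 2 = ((y : ℚ) ^ 2) ^ 2 := by
    have := congrArg (fun u : ℚˣ => (u : ℚ)) hy
    simp only [Units.val_pow_eq_pow_val] at this
    rw [← this]; ring
  obtain ⟨g, hsf, t, ht, habs⟩ := exists_sf_decomp (y : ℚ) y.ne_zero
  have hg0 : g ≠ 0 := hsf.ne_zero
  set T : ℚˣ := Units.mk0 t ht with hT
  have hu2 : ((y : ℚ)) ^ 2 = (g : ℚ) ^ 2 * t ^ 4 := by
    have hsq : |(y : ℚ)| ^ 2 = ((y : ℚ)) ^ 2 := sq_abs _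
    rw [← hsq, habs]; ring
  have hx : (x : ℚ) = (g : ℚ) ^ 2 * t ^ 4 ∨ (x : ℚ) = -((g : ℚ) ^ 2 * t ^ 4) := by
    have hfac : ((x : ℚ) - (y : ℚ) ^ 2) * ((x : ℚ) + (y : ℚ) ^ 2) = 0 := by
      linear_combination hval
    rcases mul_eq_zero.1 hfac with h0 | h0
    · left; rw [← hu2]; linarith
    · right; rw [← hu2]; linarith
  refine ⟨g, hsf, ?_⟩
  rcases hx with h0 | h0
  · left
    have hxu : x = natUnit g ^ 2 * T ^ 4 := by
      ext
      simp only [Units.val_mul, Units.val_pow_eq_pow_val, natUnit_val hg0, hT,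
        Units.val_mk0]
      exact h0
    rw [hxu]
    exact (mk_eq_mk.2 ⟨T, rfl⟩).symm
  · right
    have hxu : x = -(natUnit g ^ 2) * T ^ 4 := by
      ext
      simp only [Units.val_mul, Units.val_neg, Units.val_pow_eq_pow_val,
        natUnit_val hg0, hT, Units.val_mk0]
      rw [h0]; ring
    rw [hxu]
    exact (mk_eq_mk.2 ⟨T, rfl⟩).symm

lemma mem_GammaMod_iff {Γ : Subgroup ℚˣ} {n : ℕ} {c : ℚˣ ⧸ powSubgroup n} :
    c ∈ GammaMod Γ n ↔ ∃ x ∈ Γ, (QuotientGroup.mk x : ℚˣ ⧸ powSubgroup n) = c := by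
  simp [GammaMod, Subgroup.mem_map, QuotientGroup.mk'_apply]

lemma isPosClass_mk_sq {g : ℕ} (hg : g ≠ 0) :
    IsPosClass 4 (QuotientGroup.mk (natUnit g ^ 2)) := by
  refine ⟨natUnit g ^ 2, rfl, ?_⟩
  have := natUnit_pos hg
  simp only [Units.val_pow_eq_pow_val]
  positivity

lemma not_isPosClass_mk_neg_sq {g : ℕ} (hg : g ≠ 0) :
    ¬ IsPosClass 4 (QuotientGroup.mk (-(natUnit g ^ 2))) := by
  rintro ⟨x, hx, hpos⟩
  have hs := (sign_eq hx).1 hpos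
  simp only [Units.val_neg, Units.val_pow_eq_pow_val] at hs
  have h2 : (0:ℚ) < ((natUnit g : ℚˣ) : ℚ) ^ 2 := by
    have := natUnit_pos hg
    positivity
  linarith

lemma mk2_neg_one_ne_one : (QuotientGroup.mk (-1) : ℚˣ ⧸ powSubgroup 2) ≠ 1 := by
  rw [Ne, QuotientGroup.eq_one_iff]
  intro h
  obtain ⟨y, hy⟩ := mem_powSubgroup.1 h
  have := congrArg (fun u : ℚˣ => (u : ℚ)) hy
  simp only [Units.val_pow_eq_pow_val, Units.val_neg, Units.val_one] at this
  nlinarith [sq_nonneg ((y : ℚˣ) : ℚ)]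


lemma deltaClass_pos_sq {g : ℕ} (hg : Squarefree g) (h1 : 1 < g) :
    deltaClass 4 (QuotientGroup.mk (natUnit g ^ 2)) =
      if g % 4 = 1 then g else 4 * g := by
  set c : ℚˣ ⧸ powSubgroup 4 := QuotientGroup.mk (natUnit g ^ 2) with hc
  have hc1 : c ≠ 1 := fun h => by
    have := mk_sq_eq_one_iff hg h; omega
  have hex : ∃ g₂ : ℕ, Squarefree g₂ ∧ 1 < g₂ ∧
      ((QuotientGroup.mk (natUnit g₂ ^ (4 / 2)) : ℚˣ ⧸ powSubgroup 4) = c ∨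
       (QuotientGroup.mk (-(natUnit g₂ ^ (4 / 2))) : ℚˣ ⧸ powSubgroup 4) = c) :=
    ⟨g, hg, h1, Or.inl rfl⟩
  rw [deltaClass, if_neg hc1, dif_pos hex]
  obtain ⟨hsf₂, hlt₂, hor₂⟩ := hex.choose_spec
  have hgeq : hex.choose = g := by
    rcases hor₂ with h0 | h0
    · exact (mk_sq_eq_mk_sq hg hsf₂ h0.symm).symm
    · exact absurd h0.symm (mk_sq_ne_mk_neg_sq hg.ne_zero hsf₂.ne_zero)
  rw [hgeq]

lemma deltaClass_neg_sq {g : ℕ} (hg : Squarefree g) (h1 : 1 < g) :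
    deltaClass 4 (QuotientGroup.mk (-(natUnit g ^ 2))) =
      if g % 4 = 1 then g else 4 * g := by
  set c : ℚˣ ⧸ powSubgroup 4 := QuotientGroup.mk (-(natUnit g ^ 2)) with hc
  have hc1 : c ≠ 1 := mk_neg_sq_ne_one hg.ne_zero
  have hex : ∃ g₂ : ℕ, Squarefree g₂ ∧ 1 < g₂ ∧
      ((QuotientGroup.mk (natUnit g₂ ^ (4 / 2)) : ℚˣ ⧸ powSubgroup 4) = c ∨
       (QuotientGroup.mk (-(natUnit g₂ ^ (4 / 2))) : ℚˣ ⧸ powSubgroup 4) = c) :=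
    ⟨g, hg, h1, Or.inr rfl⟩
  rw [deltaClass, if_neg hc1, dif_pos hex]
  obtain ⟨hsf₂, hlt₂, hor₂⟩ := hex.choose_spec
  have hgeq : hex.choose = g := by
    rcases hor₂ with h0 | h0
    · exact absurd h0 (mk_sq_ne_mk_neg_sq hsf₂.ne_zero hg.ne_zero)
    · exact (mk_neg_sq_eq_mk_neg_sq hg hsf₂ h0.symm).symm
  rw [hgeq]

lemma deltaClass_one : deltaClass 4 (1 : ℚˣ ⧸ powSubgroup 4) = 1 := by
  rw [deltaClass, if_pos rfl]

lemma deltaClass_neg_one :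
    deltaClass 4 (QuotientGroup.mk (-(natUnit 1 ^ 2)) : ℚˣ ⧸ powSubgroup 4) = 1 := by
  set c : ℚˣ ⧸ powSubgroup 4 := QuotientGroup.mk (-(natUnit 1 ^ 2)) with hc
  have hc1 : c ≠ 1 := mk_neg_sq_ne_one one_ne_zero
  have hex : ¬ ∃ g₂ : ℕ, Squarefree g₂ ∧ 1 < g₂ ∧
      ((QuotientGroup.mk (natUnit g₂ ^ (4 / 2)) : ℚˣ ⧸ powSubgroup 4) = c ∨
       (QuotientGroup.mk (-(natUnit g₂ ^ (4 / 2))) : ℚˣ ⧸ powSubgroup 4) = c) := by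
    rintro ⟨g₂, hsf₂, hlt₂, h0 | h0⟩
    · exact (mk_sq_ne_mk_neg_sq hsf₂.ne_zero one_ne_zero) h0
    · have := mk_neg_sq_eq_mk_neg_sq hsf₂ squarefree_one h0
      omega
  rw [deltaClass, if_neg hc1, dif_neg hex]

lemma v2_four_mul {g : ℕ} (hg : g ≠ 0) :
    padicValNat 2 (4 * g) = 2 + padicValNat 2 g := by
  haveI : Fact (Nat.Prime 2) := ⟨Nat.prime_two⟩
  rw [padicValNat.mul (by norm_num) hg]
  congr 1
  rw [show (4:ℕ) = 2 ^ 2 from rfl, padicValNat.prime_pow]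

lemma v2_sf_even {g : ℕ} (hsf : Squarefree g) (heven : 2 ∣ g) :
    padicValNat 2 g = 1 := by
  have h1 := hsf.natFactorization_le_one 2
  rw [Nat.factorization_def _ Nat.prime_two] at h1
  have h2 : 1 ≤ padicValNat 2 g := by
    rw [← Nat.factorization_def _ Nat.prime_two]
    exact (Nat.Prime.dvd_iff_one_le_factorization Nat.prime_two hsf.ne_zero).1 heven
  omega

lemma sf_even_split {g : ℕ} (hsf : Squarefree g) (heven : 2 ∣ g) :
    Squarefree (g / 2) ∧ ¬ 2 ∣ (g / 2) ∧ g = 2 * (g / 2) := by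
  have hg2 : g = 2 * (g / 2) := (Nat.mul_div_cancel' heven).symm
  refine ⟨hsf.squarefree_of_dvd (Nat.div_dvd_of_dvd heven), ?_, hg2⟩
  intro hdvd
  have h4 : 2 * 2 ∣ g := by
    obtain ⟨k, hk⟩ := hdvd
    exact ⟨k, by omega⟩
  exact (Nat.prime_two.not_isUnit) (hsf 2 h4)

lemma pow_four_mem (u : ℚˣ) : u ^ 4 ∈ powSubgroup 4 := mem_powSubgroup.2 ⟨u, rfl⟩

lemma sq_class_sq_eq_one (u : ℚˣ) :
    (QuotientGroup.mk (u ^ 2) : ℚˣ ⧸ powSubgroup 4) ^ 2 = 1 := by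
  rw [← QuotientGroup.mk_pow, QuotientGroup.eq_one_iff, ← pow_mul]
  exact pow_four_mem u

lemma neg_sq_class_sq_eq_one (u : ℚˣ) :
    (QuotientGroup.mk (-(u ^ 2)) : ℚˣ ⧸ powSubgroup 4) ^ 2 = 1 := by
  rw [← QuotientGroup.mk_pow, QuotientGroup.eq_one_iff]
  rw [show (-(u ^ 2)) ^ 2 = (u ^ 2) ^ 2 from neg_sq _, ← pow_mul]
  exact pow_four_mem u

lemma main_iff (Γ : Subgroup ℚˣ) :
    (Nat.card (GammaMod Γ 2) = 2 ∧
      {c : ℚˣ ⧸ powSubgroup 4 | c ∈ GammaMod Γ 4 ∧ c ^ 2 = 1 ∧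
        (if IsPosClass 4 c then padicValNat 2 (deltaClass 4 c) ≤ 2
         else padicValNat 2 (deltaClass 4 c) = 3)} = (GammaMod Γ 4 : Set _)) ↔
    ((GammaMod Γ 2 : Set (ℚˣ ⧸ powSubgroup 2)) = {1, QuotientGroup.mk (-1)} ∧
     (∀ c ∈ GammaMod Γ 4, ∃ γ₀ : ℕ, Squarefree γ₀ ∧ ¬ 2 ∣ γ₀ ∧
        (c = QuotientGroup.mk (natUnit γ₀ ^ 2) ∨
         c = QuotientGroup.mk (-(natUnit (2 * γ₀) ^ 2)))) ∧
     (∃ c ∈ GammaMod Γ 4, ∃ γ₀ : ℕ, Squarefree γ₀ ∧ ¬ 2 ∣ γ₀ ∧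
        c = QuotientGroup.mk (-(natUnit (2 * γ₀) ^ 2)))) := by
  constructor
  · rintro ⟨hcard, hset⟩
    have hmem : ∀ c ∈ GammaMod Γ 4, c ^ 2 = 1 ∧
        (if IsPosClass 4 c then padicValNat 2 (deltaClass 4 c) ≤ 2
         else padicValNat 2 (deltaClass 4 c) = 3) := by
      intro c hc
      have : c ∈ {c : ℚˣ ⧸ powSubgroup 4 | c ∈ GammaMod Γ 4 ∧ c ^ 2 = 1 ∧
        (if IsPosClass 4 c then padicValNat 2 (deltaClass 4 c) ≤ 2
         else padicValNat 2 (deltaClass 4 c) = 3)} := by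
        rw [hset]; exact hc
      exact ⟨this.2.1, this.2.2⟩
    -- (2)
    have hform : ∀ c ∈ GammaMod Γ 4, ∃ γ₀ : ℕ, Squarefree γ₀ ∧ ¬ 2 ∣ γ₀ ∧
        (c = QuotientGroup.mk (natUnit γ₀ ^ 2) ∨
         c = QuotientGroup.mk (-(natUnit (2 * γ₀) ^ 2))) := by
      intro c hc
      obtain ⟨hsq, hdelta⟩ := hmem c hc
      obtain ⟨x, hxΓ, rfl⟩ := mem_GammaMod_iff.1 hc
      obtain ⟨g, hsf, hor⟩ := two_torsion_form x hsq
      rcases hor with h0 | h0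
      · -- positive class
        refine ⟨g, hsf, ?_, Or.inl h0⟩
        by_contra heven
        have hgl : 1 < g := by
          have := hsf.ne_zero; omega
        rw [h0, if_pos (isPosClass_mk_sq hsf.ne_zero),
          deltaClass_pos_sq hsf hgl] at hdelta
        have hmod : ¬ g % 4 = 1 := by omega
        rw [if_neg hmod, v2_four_mul hsf.ne_zero, v2_sf_even hsf heven] at hdelta
        omega
      · -- negative class
        rw [h0, if_neg (not_isPosClass_mk_neg_sq hsf.ne_zero)] at hdelta
        by_cases hg1 : g = 1
        · subst hg1
          rw [deltaClass_neg_one] at hdelta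
          simp at hdelta
        · have hgl : 1 < g := by
            have := hsf.ne_zero; omega
          rw [deltaClass_neg_sq hsf hgl] at hdelta
          by_cases heven : 2 ∣ g
          · obtain ⟨hsf', hodd', hg2⟩ := sf_even_split hsf heven
            refine ⟨g / 2, hsf', hodd', Or.inr ?_⟩
            rw [h0, ← hg2]
          · exfalso
            by_cases hmod : g % 4 = 1
            · rw [if_pos hmod, padicValNat.eq_zero_of_not_dvd heven] at hdelta
              omega
            · rw [if_neg hmod, v2_four_mul hsf.ne_zero,
                padicValNat.eq_zero_of_not_dvd heven] at hdelta
              omega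
    -- Γ(2) ⊆ {1, -1}
    have hsub : ∀ c ∈ GammaMod Γ 2, c = 1 ∨ c = QuotientGroup.mk (-1) := by
      intro c hc
      obtain ⟨x, hxΓ, rfl⟩ := mem_GammaMod_iff.1 hc
      have h4 : (QuotientGroup.mk x : ℚˣ ⧸ powSubgroup 4) ∈ GammaMod Γ 4 :=
        mem_GammaMod_iff.2 ⟨x, hxΓ, rfl⟩
      have hsq := (hmem _ h4).1
      have h2 : x ^ 2 ∈ powSubgroup 4 := by
        rwa [← QuotientGroup.eq_one_iff, QuotientGroup.mk_pow]
      obtain ⟨y, hy⟩ := mem_powSubgroup.1 h2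
      have hval : (x : ℚ) ^ 2 = ((y : ℚ) ^ 2) ^ 2 := by
        have := congrArg (fun u : ℚˣ => (u : ℚ)) hy
        simp only [Units.val_pow_eq_pow_val] at this
        rw [← this]; ring
      have hfac : ((x : ℚ) - (y : ℚ) ^ 2) * ((x : ℚ) + (y : ℚ) ^ 2) = 0 := by
        linear_combination hval
      rcases mul_eq_zero.1 hfac with h0 | h0
      · left
        rw [QuotientGroup.eq_one_iff]
        refine mem_powSubgroup.2 ⟨y, ?_⟩
        ext
        simp only [Units.val_pow_eq_pow_val]
        linarith
      · right
        rw [mk_eq_mk]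
        refine ⟨y⁻¹, ?_⟩
        ext
        have hy0 : ((y : ℚˣ) : ℚ) ≠ 0 := y.ne_zero
        simp only [Units.val_mul, Units.val_neg, Units.val_one,
          Units.val_pow_eq_pow_val, Units.val_inv_eq_inv_val]
        field_simp
        linarith
    -- -1 ∈ Γ(2)
    have hneg : (QuotientGroup.mk (-1) : ℚˣ ⧸ powSubgroup 2) ∈ GammaMod Γ 2 := by
      by_contra hno
      have hbot : GammaMod Γ 2 = ⊥ := by
        rw [Subgroup.eq_bot_iff_forall]
        intro c hc
        rcases hsub c hc with h | h
        · exact h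
        · exact absurd (h ▸ hc) hno
      rw [hbot] at hcard
      simp at hcard
    refine ⟨?_, hform, ?_⟩
    · apply Set.Subset.antisymm
      · intro c hc
        rcases hsub c hc with h | h
        · exact Or.inl h
        · exact Or.inr h
      · rintro c (rfl | rfl)
        · exact (GammaMod Γ 2).one_mem
        · exact hneg
    · -- existence of negative form
      obtain ⟨x, hxΓ, hx2⟩ := mem_GammaMod_iff.1 hneg
      have hxneg : (x : ℚ) < 0 := by
        obtain ⟨z, hz⟩ := mk_eq_mk.1 hx2
        have := congrArg (fun u : ℚˣ => (u : ℚ)) hz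
        simp only [Units.val_mul, Units.val_neg, Units.val_one,
          Units.val_pow_eq_pow_val] at this
        have hz0 : ((z : ℚˣ) : ℚ) ≠ 0 := z.ne_zero
        rcases unit_pos_or_neg x with hp | hn
        · exfalso; nlinarith [sq_nonneg ((z : ℚˣ) : ℚ)]
        · exact hn
      have h4 : (QuotientGroup.mk x : ℚˣ ⧸ powSubgroup 4) ∈ GammaMod Γ 4 :=
        mem_GammaMod_iff.2 ⟨x, hxΓ, rfl⟩
      obtain ⟨γ₀, hsf, hodd, hor⟩ := hform _ h4
      rcases hor with h0 | h0
      · exfalso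
        have := (sign_eq h0).2 (by
          have := natUnit_pos (g := γ₀) (by rintro rfl; exact hodd ⟨0, rfl⟩)
          simp only [Units.val_pow_eq_pow_val]
          positivity)
        linarith
      · exact ⟨_, h4, γ₀, hsf, hodd, h0⟩
  · rintro ⟨h1, h2, h3⟩
    constructor
    · have hne : (1 : ℚˣ ⧸ powSubgroup 2) ≠ QuotientGroup.mk (-1) :=
        Ne.symm mk2_neg_one_ne_one
      rw [show Nat.card (GammaMod Γ 2) =
        Nat.card ((GammaMod Γ 2 : Set (ℚˣ ⧸ powSubgroup 2))) from rfl, h1,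
        Nat.card_coe_set_eq, Set.ncard_pair hne]
    · ext c
      simp only [Set.mem_setOf_eq, SetLike.mem_coe]
      constructor
      · rintro ⟨hc, -, -⟩; exact hc
      · intro hc
        obtain ⟨γ₀, hsf, hodd, hor⟩ := h2 c hc
        have hγ0 : γ₀ ≠ 0 := by rintro rfl; exact hodd ⟨0, rfl⟩
        refine ⟨hc, ?_, ?_⟩
        · rcases hor with rfl | rfl
          · exact sq_class_sq_eq_one _
          · exact neg_sq_class_sq_eq_one _
        · rcases hor with rfl | rfl
          · rw [if_pos (isPosClass_mk_sq hγ0)]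
            by_cases hγ1 : γ₀ = 1
            · subst hγ1
              rw [show (QuotientGroup.mk (natUnit 1 ^ 2) : ℚˣ ⧸ powSubgroup 4) = 1 by
                rw [natUnit_one]; simp, deltaClass_one]
              simp
            · have hγl : 1 < γ₀ := by omega
              rw [deltaClass_pos_sq hsf hγl]
              by_cases hmod : γ₀ % 4 = 1
              · rw [if_pos hmod, padicValNat.eq_zero_of_not_dvd hodd]; omega
              · rw [if_neg hmod, v2_four_mul hγ0,
                  padicValNat.eq_zero_of_not_dvd hodd]
          · have h2γ : (2 * γ₀) ≠ 0 := by omega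
            rw [if_neg (not_isPosClass_mk_neg_sq h2γ)]
            have hsf2 : Squarefree (2 * γ₀) := by
              rw [Nat.squarefree_mul ((Nat.Prime.coprime_iff_not_dvd
                Nat.prime_two).2 hodd)]
              exact ⟨Nat.prime_two.squarefree, hsf⟩
            have hlt : 1 < 2 * γ₀ := by omega
            rw [deltaClass_neg_sq hsf2 hlt]
            have hmod : ¬ (2 * γ₀) % 4 = 1 := by omega
            rw [if_neg hmod, v2_four_mul h2γ, v2_sf_even hsf2 ⟨γ₀, rfl⟩]


lemma main_iff' (Γ : Subgroup ℚˣ) (v : ℕ) (hv : v = 2) :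
    (Nat.card (GammaMod Γ 2) = 2 ∧
      {c : ℚˣ ⧸ powSubgroup (2 ^ v) | c ∈ GammaMod Γ (2 ^ v) ∧ c ^ 2 = 1 ∧
        (if IsPosClass (2 ^ v) c then padicValNat 2 (deltaClass (2 ^ v) c) ≤ v
         else padicValNat 2 (deltaClass (2 ^ v) c) = v + 1)} =
        (GammaMod Γ (2 ^ v) : Set (ℚˣ ⧸ powSubgroup (2 ^ v)))) ↔
    ((GammaMod Γ 2 : Set (ℚˣ ⧸ powSubgroup 2)) = {1, QuotientGroup.mk (-1)} ∧
     (∀ c ∈ GammaMod Γ 4, ∃ γ₀ : ℕ, Squarefree γ₀ ∧ ¬ 2 ∣ γ₀ ∧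
        (c = QuotientGroup.mk (natUnit γ₀ ^ 2) ∨
         c = QuotientGroup.mk (-(natUnit (2 * γ₀) ^ 2)))) ∧
     (∃ c ∈ GammaMod Γ 4, ∃ γ₀ : ℕ, Squarefree γ₀ ∧ ¬ 2 ∣ γ₀ ∧
        c = QuotientGroup.mk (-(natUnit (2 * γ₀) ^ 2)))) := by
  subst hv
  exact main_iff Γ

/-- **Remark after Theorem 5:** for `2‖m`, `|Γ(2)| = 2` and `tildeΓ(2m) = Γ(4)` hold
if and only if `Γ(2) = {(ℚ*)², −(ℚ*)²}`, all elements of `Γ(4)` have the form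
`γ₀²(ℚ*)⁴` or `−4γ₀²(ℚ*)⁴` with `γ₀` odd squarefree, and at least one element has the
second form. -/
theorem remark_two_exactly_divides (Γ : Subgroup ℚˣ) (hFG : Γ.FG)
    (m : ℕ) (hm : 1 ≤ m) (hv : padicValNat 2 m = 1) :
    (Nat.card (GammaMod Γ 2) = 2 ∧
      tildeGamma Γ (2 * m) =
        (GammaMod Γ (2 ^ padicValNat 2 (2 * m)) :
          Set (ℚˣ ⧸ powSubgroup (2 ^ padicValNat 2 (2 * m))))) ↔
    ((GammaMod Γ 2 : Set (ℚˣ ⧸ powSubgroup 2)) = {1, QuotientGroup.mk (-1)} ∧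
     (∀ c ∈ GammaMod Γ 4, ∃ γ₀ : ℕ, Squarefree γ₀ ∧ ¬ 2 ∣ γ₀ ∧
        (c = QuotientGroup.mk (natUnit γ₀ ^ 2) ∨
         c = QuotientGroup.mk (-(natUnit (2 * γ₀) ^ 2)))) ∧
     (∃ c ∈ GammaMod Γ 4, ∃ γ₀ : ℕ, Squarefree γ₀ ∧ ¬ 2 ∣ γ₀ ∧
        c = QuotientGroup.mk (-(natUnit (2 * γ₀) ^ 2)))) := by
  haveI : Fact (Nat.Prime 2) := ⟨Nat.prime_two⟩
  have key : padicValNat 2 (2 * m) = 2 := by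
    rw [padicValNat.mul two_ne_zero (by omega), padicValNat.self one_lt_two, hv]
  simp only [tildeGamma]
  exact main_iff' Γ _ key
end

section
/- For every finitely generated subgroup Γ ⊂ ℚ* of rank r ≥ 1 and every integer m ≥ 1, one has A(Γ,m) ≠ 0; indeed A(Γ,m) > 0. -/
/- Common definitions: finitely generated multiplicative subgroups `Γ ⊆ ℚˣ`,
the quotients `Γ(n) = Γ·(ℚ*)ⁿ/(ℚ*)ⁿ`, the invariants `δ(γ)`, the group `tildeΓ(m)`,
the constants `A(Γ,m)` and `B_{Γ,k}`, and the density `ρ(Γ,m)`. -/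

open scoped Classical

noncomputable section

lemma pow_mem_powSubgroup (n : ℕ) (q : ℚˣ) : q ^ n ∈ powSubgroup n := ⟨q, rfl⟩

lemma quot_pow_eq_one (n : ℕ) (x : ℚˣ ⧸ powSubgroup n) : x ^ n = 1 := by
  induction x using QuotientGroup.induction_on with
  | H q =>
    rw [← QuotientGroup.mk_pow, QuotientGroup.eq_one_iff]
    exact pow_mem_powSubgroup n q

lemma finite_gammaMod (Γ : Subgroup ℚˣ) (hFG : Γ.FG) (n : ℕ) (hn : 0 < n) :
    Finite (GammaMod Γ n) := by
  haveI : Group.FG Γ := (Group.fg_iff_subgroup_fg Γ).mpr hFG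
  have hrange : ((QuotientGroup.mk' (powSubgroup n)).comp Γ.subtype).range = GammaMod Γ n := by
    rw [MonoidHom.range_comp, Subgroup.range_subtype]; rfl
  haveI : Group.FG (GammaMod Γ n) := by
    rw [← hrange]; infer_instance
  exact CommGroup.finite_of_fg_torsion _ (fun x => isOfFinOrder_iff_pow_eq_one.mpr
    ⟨n, hn, by ext1; simpa using quot_pow_eq_one n (x : ℚˣ ⧸ powSubgroup n)⟩)

lemma card_gammaMod_pos (Γ : Subgroup ℚˣ) (hFG : Γ.FG) (n : ℕ) (hn : 0 < n) :
    0 < Nat.card (GammaMod Γ n) := by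
  haveI := finite_gammaMod Γ hFG n hn
  exact Nat.card_pos

lemma card_gammaMod_le (Γ : Subgroup ℚˣ) (hFG : Γ.FG) (n k : ℕ) (hn : 0 < n) (hk : 0 < k) :
    Nat.card (GammaMod Γ n) ≤ Nat.card (GammaMod Γ (n * k)) := by
  haveI := finite_gammaMod Γ hFG (n * k) (by positivity)
  have hle : powSubgroup (n * k) ≤ (powSubgroup n).comap (MonoidHom.id ℚˣ) := by
    rintro x ⟨y, rfl⟩
    exact ⟨y ^ k, by simp [powMonoidHom, ← pow_mul, mul_comm]⟩
  set φ := QuotientGroup.map (powSubgroup (n * k)) (powSubgroup n) (MonoidHom.id ℚˣ) hle with hφ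
  have key : (GammaMod Γ (n * k)).map φ = GammaMod Γ n := by
    unfold GammaMod
    rw [Subgroup.map_map]
    congr 1
  calc Nat.card (GammaMod Γ n) = Nat.card ((GammaMod Γ (n * k)).map φ) := by rw [key]
    _ ≤ Nat.card (GammaMod Γ (n * k)) :=
        Nat.card_le_card_of_surjective _ (φ.subgroupMap_surjective _)

lemma val_rat_eq (p : ℕ) (q : ℚ) :
    padicValRat p q = (padicValNat p q.num.natAbs : ℤ) - padicValNat p q.den := rfl

lemma not_dvd_of_coprime {p a b : ℕ} (hp : p.Prime) (hcop : Nat.Coprime a b) (ha : p ∣ a) :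
    ¬ p ∣ b := by
  intro hb
  have : p ∣ Nat.gcd a b := Nat.dvd_gcd ha hb
  rw [Nat.Coprime] at hcop
  rw [hcop, Nat.dvd_one] at this
  exact hp.one_lt.ne' this

lemma exists_prime_val_ne_zero (g : ℚˣ) (hg : ∀ n : ℕ, 0 < n → g ^ n ≠ 1) :
    ∃ p : ℕ, p.Prime ∧ padicValRat p (g : ℚ) ≠ 0 := by
  set q : ℚ := (g : ℚ) with hq
  have hq0 : q ≠ 0 := g.ne_zero
  have hq1 : q ≠ 1 := by
    intro h
    exact hg 1 one_pos (by
      rw [pow_one]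
      exact Units.ext (by rw [Units.val_one]; exact h))
  have hqm1 : q ≠ -1 := by
    intro h
    apply hg 2 two_pos
    apply Units.ext
    rw [Units.val_one, Units.val_pow_eq_pow_val, ← hq, h]
    norm_num
  have hden_pos : 0 < q.den := q.pos
  by_cases hnum : q.num.natAbs = 1
  · by_cases hden : q.den = 1
    · exfalso
      have hqn : q = (q.num : ℚ) := by
        conv_lhs => rw [← Rat.num_div_den q]
        rw [hden]; simp
      rcases Int.natAbs_eq_iff.mp hnum with h | h
      · exact hq1 (by rw [hqn, h]; norm_num)
      · exact hqm1 (by rw [hqn, h]; push_cast; norm_num)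
    · refine ⟨q.den.minFac, Nat.minFac_prime hden, ?_⟩
      rw [val_rat_eq]
      have h1 : padicValNat q.den.minFac q.num.natAbs = 0 :=
        padicValNat.eq_zero_of_not_dvd
          (not_dvd_of_coprime (Nat.minFac_prime hden) q.reduced.symm q.den.minFac_dvd)
      haveI : Fact (q.den.minFac.Prime) := ⟨Nat.minFac_prime hden⟩
      have h2 : 1 ≤ padicValNat q.den.minFac q.den :=
        one_le_padicValNat_of_dvd hden_pos.ne' q.den.minFac_dvd
      omega
  · have hnum0 : q.num.natAbs ≠ 0 := by
      simpa [Int.natAbs_eq_zero] using Rat.num_ne_zero.mpr hq0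
    refine ⟨q.num.natAbs.minFac, Nat.minFac_prime hnum, ?_⟩
    rw [val_rat_eq]
    have h1 : padicValNat q.num.natAbs.minFac q.den = 0 :=
      padicValNat.eq_zero_of_not_dvd
        (not_dvd_of_coprime (Nat.minFac_prime hnum) q.reduced q.num.natAbs.minFac_dvd)
    haveI : Fact (q.num.natAbs.minFac.Prime) := ⟨Nat.minFac_prime hnum⟩
    have h2 : 1 ≤ padicValNat q.num.natAbs.minFac q.num.natAbs :=
      one_le_padicValNat_of_dvd hnum0 q.num.natAbs.minFac_dvd
    omega

lemma card_gammaMod_ge (Γ : Subgroup ℚˣ) (hFG : Γ.FG) {g : ℚˣ} (hgΓ : g ∈ Γ)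
    {p ℓ : ℕ} (hp : p.Prime) (hv : padicValRat p (g : ℚ) ≠ 0) (hℓ : ℓ.Prime)
    (hlarge : (padicValRat p (g : ℚ)).natAbs < ℓ) :
    ℓ ≤ Nat.card (GammaMod Γ ℓ) := by
  haveI : Fact ℓ.Prime := ⟨hℓ⟩
  haveI : Fact p.Prime := ⟨hp⟩
  have hnotmem : g ∉ powSubgroup ℓ := by
    rintro ⟨x, hx⟩
    have hxq : ((g : ℚˣ) : ℚ) = ((x : ℚˣ) : ℚ) ^ ℓ := by
      rw [← hx]; simp [powMonoidHom]
    have hval : padicValRat p (g : ℚ) = (ℓ : ℤ) * padicValRat p (x : ℚ) := by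
      rw [hxq, padicValRat.pow (x : ℚ)]
    have hdvd' : (ℓ : ℤ) ∣ padicValRat p (g : ℚ) := ⟨padicValRat p (x : ℚ), hval⟩
    have hdvd : ℓ ∣ (padicValRat p (g : ℚ)).natAbs := by
      simpa using Int.natAbs_dvd_natAbs.mpr hdvd'
    have := Nat.le_of_dvd (Int.natAbs_pos.mpr hv) hdvd
    omega
  set z : GammaMod Γ ℓ := ⟨QuotientGroup.mk' (powSubgroup ℓ) g, ⟨g, hgΓ, rfl⟩⟩ with hz
  have hz1 : z ≠ 1 := by
    intro h
    apply hnotmem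
    rw [← QuotientGroup.eq_one_iff (N := powSubgroup ℓ) g]
    exact congrArg Subtype.val h
  have hzℓ : z ^ ℓ = 1 := by
    ext1
    simpa using quot_pow_eq_one ℓ (z : ℚˣ ⧸ powSubgroup ℓ)
  have horder : orderOf z = ℓ := orderOf_eq_prime hzℓ hz1
  haveI := finite_gammaMod Γ hFG ℓ hℓ.pos
  have hdvdcard := orderOf_dvd_natCard z
  rw [horder] at hdvdcard
  exact Nat.le_of_dvd (card_gammaMod_pos Γ hFG ℓ hℓ.pos) hdvdcard

lemma tprod_part_pos (Γ : Subgroup ℚˣ) (hFG : Γ.FG) (hrank : ∃ g ∈ Γ, ∀ n : ℕ, 0 < n → g ^ n ≠ 1)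
    (m : ℕ) :
    0 < ∏' ℓ : {ℓ : ℕ // ℓ.Prime ∧ ℓ ≠ 2 ∧ ¬ ℓ ∣ m},
      (1 - 1 / ((((ℓ : ℕ) : ℝ) - 1) * (Nat.card (GammaMod Γ ((ℓ : ℕ))) : ℝ))) := by
  obtain ⟨g, hgΓ, hg⟩ := hrank
  obtain ⟨p, hp, hv⟩ := exists_prime_val_ne_zero g hg
  set N : ℕ := (padicValRat p (g : ℚ)).natAbs + 1 with hN
  set K : ℝ := (N : ℝ) ^ 2 + 4 with hK
  have hK4 : (4 : ℝ) ≤ K := by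
    have : (0:ℝ) ≤ (N : ℝ) ^ 2 := sq_nonneg _
    rw [hK]; linarith
  set I := {ℓ : ℕ // ℓ.Prime ∧ ℓ ≠ 2 ∧ ¬ ℓ ∣ m} with hI
  set f : I → ℝ := fun ℓ =>
    1 - 1 / ((((ℓ : ℕ) : ℝ) - 1) * (Nat.card (GammaMod Γ ((ℓ : ℕ))) : ℝ)) with hf
  set D : I → ℝ := fun ℓ =>
    (((ℓ : ℕ) : ℝ) - 1) * (Nat.card (GammaMod Γ ((ℓ : ℕ))) : ℝ) with hD
  have hℓ3 : ∀ i : I, (3 : ℝ) ≤ ((i : ℕ) : ℝ) := by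
    rintro ⟨ℓ, hℓ, hℓ2, -⟩
    have := hℓ.two_le
    exact_mod_cast (by omega : 3 ≤ ℓ)
  have hc1 : ∀ i : I, (1 : ℝ) ≤ (Nat.card (GammaMod Γ ((i : ℕ))) : ℝ) := by
    rintro ⟨ℓ, hℓ, -, -⟩
    exact_mod_cast card_gammaMod_pos Γ hFG ℓ hℓ.pos
  have hD2 : ∀ i : I, (2 : ℝ) ≤ D i := by
    intro i
    have h1 := hℓ3 i
    have h2 := hc1 i
    show (2:ℝ) ≤ (((i : ℕ) : ℝ) - 1) * (Nat.card (GammaMod Γ ((i : ℕ))) : ℝ)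
    nlinarith
  have hDpos : ∀ i : I, (0 : ℝ) < D i := fun i => lt_of_lt_of_le two_pos (hD2 i)
  have hfD : ∀ i : I, f i = 1 - 1 / D i := fun i => rfl
  have hf_half : ∀ i : I, (1/2 : ℝ) ≤ f i := by
    intro i
    rw [hfD i]
    have : 1 / D i ≤ 1 / 2 := one_div_le_one_div_of_le two_pos (hD2 i)
    linarith
  have hfpos : ∀ i : I, (0 : ℝ) < f i := fun i => lt_of_lt_of_le (by norm_num) (hf_half i)
  have hfle1 : ∀ i : I, f i ≤ 1 := by
    intro i
    rw [hfD i]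
    have := hDpos i
    have : 0 < 1 / D i := by positivity
    linarith
  -- the key arithmetic bound
  have hbound : ∀ i : I, |Real.log (f i)| ≤ K / ((i : ℕ) : ℝ) ^ 2 := by
    intro i
    have h2D : |Real.log (f i)| ≤ 2 / D i := by
      rw [abs_of_nonpos (Real.log_nonpos (hfpos i).le (hfle1 i)), ← Real.log_inv]
      have h1 : Real.log (f i)⁻¹ ≤ (f i)⁻¹ - 1 :=
        Real.log_le_sub_one_of_pos (inv_pos.mpr (hfpos i))
      have h2 : (f i)⁻¹ ≤ 2 := by
        rw [show (2:ℝ) = (1/2 : ℝ)⁻¹ by norm_num]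
        exact inv_anti₀ (by norm_num) (hf_half i)
      have h3 : (f i)⁻¹ * f i = 1 := inv_mul_cancel₀ (hfpos i).ne'
      have h4 : 1 - f i = 1 / D i := by rw [hfD i]; ring
      have h1f : (0:ℝ) ≤ 1 - f i := by
        have hd := hDpos i
        have : 0 < 1 / D i := by positivity
        rw [hfD i]; linarith
      have h5 : (f i)⁻¹ * (1 - f i) ≤ 2 * (1 - f i) :=
        mul_le_mul_of_nonneg_right h2 h1f
      calc Real.log (f i)⁻¹ ≤ (f i)⁻¹ - 1 := h1
        _ = (f i)⁻¹ * (1 - f i) := by nlinarith [h3]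
        _ ≤ 2 * (1 - f i) := h5
        _ = 2 / D i := by rw [h4]; ring
    refine h2D.trans ?_
    rw [div_le_div_iff₀ (hDpos i) (by have := hℓ3 i; positivity)]
    rcases le_or_gt N (i : ℕ) with hcase | hcase
    · -- large ℓ : card ≥ ℓ
      have hcard : ((i : ℕ) : ℝ) ≤ (Nat.card (GammaMod Γ ((i : ℕ))) : ℝ) := by
        exact_mod_cast card_gammaMod_ge Γ hFG hgΓ hp hv i.2.1 (by omega)
      have h1 := hℓ3 i
      have h2 : (((i : ℕ) : ℝ) - 1) * ((i : ℕ) : ℝ) ≤ D i := by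
        rw [hD]
        exact mul_le_mul_of_nonneg_left hcard (by linarith)
      nlinarith [mul_le_mul_of_nonneg_right hK4 (hDpos i).le,
        mul_le_mul_of_nonneg_left h1 (by linarith : (0:ℝ) ≤ ((i : ℕ) : ℝ))]
    · -- small ℓ
      have h1 : ((i : ℕ) : ℝ) ≤ (N : ℝ) := by exact_mod_cast hcase.le
      have h2 := hD2 i
      have h3 := hℓ3 i
      have h4 : ((i : ℕ) : ℝ) ^ 2 ≤ (N : ℝ) ^ 2 := pow_le_pow_left₀ (by linarith) h1 2
      have h5 : K * 2 ≤ K * D i := mul_le_mul_of_nonneg_left h2 (by linarith)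
      nlinarith [hK]
  -- summability of the logs
  have hbase : Summable (fun n : ℕ => K * (1 / (n : ℝ) ^ 2)) :=
    (Real.summable_one_div_nat_pow.mpr one_lt_two).mul_left K
  have hsummK : Summable (fun i : I => K / ((i : ℕ) : ℝ) ^ 2) := by
    have := hbase.subtype {ℓ : ℕ | ℓ.Prime ∧ ℓ ≠ 2 ∧ ¬ ℓ ∣ m}
    exact this.congr (fun i => mul_one_div K _)
  have hsumlog : Summable (fun i : I => Real.log (f i)) :=
    Summable.of_abs (hsummK.of_nonneg_of_le (fun i => abs_nonneg _) hbound)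
  have hprod : HasProd f (Real.exp (∑' i : I, Real.log (f i))) := by
    have h := hsumlog.hasSum.rexp
    have heq : (Real.exp ∘ fun i : I => Real.log (f i)) = f :=
      funext fun i => Real.exp_log (hfpos i)
    rwa [heq] at h
  rw [hprod.tprod_eq]
  exact Real.exp_pos _

lemma finprod_part_pos (Γ : Subgroup ℚˣ) (hFG : Γ.FG) (m : ℕ) (hm : 1 ≤ m) :
    0 < ∏ᶠ ℓ ∈ {ℓ : ℕ | ℓ.Prime ∧ ℓ ≠ 2 ∧ ℓ ∣ m},
      (1 - (Nat.card (GammaMod Γ (ℓ ^ padicValNat ℓ m)) : ℝ) /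
        ((ℓ : ℝ) * (Nat.card (GammaMod Γ (ℓ ^ (padicValNat ℓ m + 1))) : ℝ))) := by
  have hSfin : Set.Finite {ℓ : ℕ | ℓ.Prime ∧ ℓ ≠ 2 ∧ ℓ ∣ m} :=
    Set.Finite.subset (Set.finite_Icc 1 m)
      (fun ℓ hℓ => Set.mem_Icc.mpr ⟨hℓ.1.pos, Nat.le_of_dvd hm hℓ.2.2⟩)
  rw [← Set.Finite.coe_toFinset hSfin, finprod_mem_coe_finset]
  apply Finset.prod_pos
  intro ℓ hℓmem
  obtain ⟨hℓ, hℓ2, hdvd⟩ := (Set.Finite.mem_toFinset hSfin).mp hℓmem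
  set v := padicValNat ℓ m with hv
  have hc12 : Nat.card (GammaMod Γ (ℓ ^ v)) ≤ Nat.card (GammaMod Γ (ℓ ^ (v + 1))) := by
    have := card_gammaMod_le Γ hFG (ℓ ^ v) ℓ (pow_pos hℓ.pos v) hℓ.pos
    rwa [← pow_succ] at this
  have hc2 : 0 < Nat.card (GammaMod Γ (ℓ ^ (v + 1))) :=
    card_gammaMod_pos Γ hFG _ (pow_pos hℓ.pos _)
  have hℓ3 : (3 : ℝ) ≤ (ℓ : ℝ) := by
    have := hℓ.two_le
    exact_mod_cast (by omega : 3 ≤ ℓ)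
  have hc2R : (1 : ℝ) ≤ (Nat.card (GammaMod Γ (ℓ ^ (v + 1))) : ℝ) := by exact_mod_cast hc2
  have hc12R : (Nat.card (GammaMod Γ (ℓ ^ v)) : ℝ) ≤ (Nat.card (GammaMod Γ (ℓ ^ (v + 1))) : ℝ) := by
    exact_mod_cast hc12
  have hden : (0 : ℝ) < (ℓ : ℝ) * (Nat.card (GammaMod Γ (ℓ ^ (v + 1))) : ℝ) := by nlinarith
  rw [sub_pos, div_lt_one hden]
  nlinarith

theorem AGamma_pos' (Γ : Subgroup ℚˣ) (hFG : Γ.FG)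
    (hrank : ∃ g ∈ Γ, ∀ n : ℕ, 0 < n → g ^ n ≠ 1)
    (m : ℕ) (hm : 1 ≤ m) :
    0 < (1 / ((Nat.totient m : ℝ) * (Nat.card (GammaMod Γ m) : ℝ))) *
      (∏ᶠ ℓ ∈ {ℓ : ℕ | ℓ.Prime ∧ ℓ ≠ 2 ∧ ℓ ∣ m},
          (1 - (Nat.card (GammaMod Γ (ℓ ^ padicValNat ℓ m)) : ℝ) /
            ((ℓ : ℝ) * (Nat.card (GammaMod Γ (ℓ ^ (padicValNat ℓ m + 1))) : ℝ)))) *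
      (∏' ℓ : {ℓ : ℕ // ℓ.Prime ∧ ℓ ≠ 2 ∧ ¬ ℓ ∣ m},
          (1 - 1 / ((((ℓ : ℕ) : ℝ) - 1) * (Nat.card (GammaMod Γ ((ℓ : ℕ))) : ℝ)))) := by
  have h1 : 0 < 1 / ((Nat.totient m : ℝ) * (Nat.card (GammaMod Γ m) : ℝ)) := by
    apply div_pos one_pos
    apply mul_pos
    · exact_mod_cast Nat.totient_pos.mpr hm
    · exact_mod_cast card_gammaMod_pos Γ hFG m hm
  exact mul_pos (mul_pos h1 (finprod_part_pos Γ hFG m hm)) (tprod_part_pos Γ hFG hrank m)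

end

/-- **`A(Γ,m)` never vanishes; in fact it is positive.** -/
theorem AGamma_pos (Γ : Subgroup ℚˣ) (hFG : Γ.FG) (hrank : HasPositiveRank Γ)
    (m : ℕ) (hm : 1 ≤ m) :
    AGamma Γ m ≠ 0 ∧ 0 < AGamma Γ m := by
  have hpos : 0 < AGamma Γ m := by
    unfold AGamma
    exact AGamma_pos' Γ hFG hrank m hm
  exact ⟨hpos.ne', hpos⟩
end
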